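/- arXiv:1306.1505 — 6 statements merged into one kernel-verified Lean document; each statement's English description precedes it below -/
import Mathlib

section
/- Let β₁, β₂ ∈ ℂ with β₁ ≠ 1 and β₂ ≠ 0, and define f(μ) = e^{iμ} − 1 − (iβ₂/(β₁−1))(e^{iμ}+1)/μ. Then there exists N such that for every integer n with |n| ≥ N, f has exactly one zero μ_n in the disk {μ : |μ − 2πn| ≤ C/|n|} for a suitable constant C, and μ_n = 2πn + (β₂/(β₁−1))·1/(πn) + O(1/n²) as |n| → ∞. -/
set_option maxHeartbeats 2000000

open Complex Real

private lemma norm_lb (x y : ℂ) : ‖x‖ - ‖y‖ ≤ ‖x + y‖ := by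
  simpa using norm_sub_norm_le x (-y)

private lemma key_lemma (a : ℂ) (ha : a ≠ 0) (n : ℤ)
    (hn : 4 * ‖a‖ / π + 2 * ‖a‖ + 2 ≤ |(n : ℝ)|) :
    ∃ m : ℂ,
      exp (I * m) - 1 - a * (exp (I * m) + 1) / m = 0 ∧
      ‖m - 2 * (π : ℂ) * n‖ ≤ (4 * ‖a‖ / π) / |(n : ℝ)| ∧
      (∀ z : ℂ, exp (I * z) - 1 - a * (exp (I * z) + 1) / z = 0 →
        ‖z - 2 * (π : ℂ) * n‖ ≤ (4 * ‖a‖ / π) / |(n : ℝ)| → z = m) ∧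
      ‖m - 2 * (π : ℂ) * n - (-I * a) * (1 / ((π : ℂ) * n))‖ ≤ (6 * ‖a‖ ^ 2 + 1) / (n : ℝ) ^ 2 := by
  have hA0 : 0 < ‖a‖ := norm_pos_iff.mpr ha
  set A : ℝ := ‖a‖ with hAdef
  have hπ3 : (3 : ℝ) < π := Real.pi_gt_three
  have hπ0 : (0 : ℝ) < π := by linarith
  set nr : ℝ := |(n : ℝ)| with hnrdef
  have hCpos : 0 < 4 * A / π := div_pos (by nlinarith) hπ0
  have hn2 : 2 ≤ nr := by nlinarith
  have hnA : 2 * A ≤ nr := by nlinarith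
  have hn0 : (0 : ℝ) < nr := by linarith
  have hnR : (n : ℝ) ≠ 0 := by
    intro h; rw [hnrdef, h] at hn0; simp at hn0
  have hnz : (n : ℂ) ≠ 0 := by
    exact_mod_cast Int.cast_ne_zero.mpr (fun h => hnR (by simp [h]))
  set r : ℝ := (4 * A / π) / nr with hrdef
  have hr0 : 0 < r := div_pos hCpos hn0
  have hr1 : r < 1 := by
    rw [hrdef, div_lt_one hn0]; nlinarith
  set w : ℂ → ℂ := fun δ => 2 * (π : ℂ) * n + δ - a with hwdef
  set u : ℂ → ℂ := fun δ => 2 * a / w δ with hudef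
  set Φ : ℂ → ℂ := fun δ => -I * Complex.log (1 + u δ) with hΦdef
  set s : Set ℂ := Metric.closedBall 0 r with hsdef
  have hmem : ∀ δ : ℂ, δ ∈ s ↔ ‖δ‖ ≤ r := by
    intro δ; rw [hsdef, Metric.mem_closedBall, dist_zero_right]
  have hπnr : 3 * nr ≤ π * nr := mul_le_mul_of_nonneg_right hπ3.le hn0.le
  have hnorm2πn : ‖(2 * (π : ℂ) * n : ℂ)‖ = 2 * π * nr := by
    have h : (2 * (π : ℂ) * n : ℂ) = (((2 * π * (n : ℝ)) : ℝ) : ℂ) := by push_cast; ring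
    rw [h, Complex.norm_real, Real.norm_eq_abs, abs_mul, abs_of_pos (by linarith : (0:ℝ) < 2*π)]
  have hnormπn : ‖((π : ℂ) * n : ℂ)‖ = π * nr := by
    have h : ((π : ℂ) * n : ℂ) = (((π * (n : ℝ)) : ℝ) : ℂ) := by push_cast; ring
    rw [h, Complex.norm_real, Real.norm_eq_abs, abs_mul, abs_of_pos hπ0]
  have hwlb : ∀ δ ∈ s, π * nr ≤ ‖w δ‖ := by
    intro δ hδ
    have hδr : ‖δ‖ ≤ r := (hmem δ).mp hδ
    have h1 : ‖(2 * (π : ℂ) * n : ℂ)‖ - ‖δ - a‖ ≤ ‖2 * (π : ℂ) * n + (δ - a)‖ :=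
      norm_lb _ _
    have h2 : ‖δ - a‖ ≤ ‖δ‖ + ‖a‖ := norm_sub_le δ a
    have h3 : w δ = 2 * (π : ℂ) * n + (δ - a) := by rw [hwdef]; ring
    rw [h3]
    rw [hnorm2πn] at h1
    nlinarith
  have hwne : ∀ δ ∈ s, w δ ≠ 0 := by
    intro δ hδ
    have h1 := hwlb δ hδ
    have : 0 < ‖w δ‖ := by nlinarith
    exact norm_pos_iff.mp this
  have hub : ∀ δ ∈ s, ‖u δ‖ ≤ 2 * A / (π * nr) := by
    intro δ hδ
    rw [hudef]
    simp only
    have hwl := hwlb δ hδ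
    have hw0 : (0:ℝ) < ‖w δ‖ := lt_of_lt_of_le (mul_pos hπ0 hn0) hwl
    have h2 : ‖(2 : ℂ) * a‖ = 2 * A := by rw [norm_mul, hAdef]; norm_num
    rw [norm_div, h2, div_le_div_iff₀ hw0 (mul_pos hπ0 hn0)]
    nlinarith
  have huhalf : ∀ δ ∈ s, ‖u δ‖ ≤ 1 / 2 := by
    intro δ hδ
    have h1 := hub δ hδ
    have h : 2 * A / (π * nr) ≤ 1 / 2 := by
      rw [div_le_div_iff₀ (mul_pos hπ0 hn0) (by norm_num)]
      nlinarith
    linarith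
  have hslit : ∀ δ ∈ s, 1 + u δ ∈ Complex.slitPlane := by
    intro δ hδ
    have h := huhalf δ hδ
    have hre : |(u δ).re| ≤ ‖u δ‖ := Complex.abs_re_le_norm (u δ)
    rw [Complex.mem_slitPlane_iff]
    left
    have h2 : (1 + u δ).re = 1 + (u δ).re := by simp
    rw [h2]
    have h3 := abs_le.mp hre
    linarith
  have h1une : ∀ δ ∈ s, 1 + u δ ≠ 0 := fun δ hδ => Complex.slitPlane_ne_zero (hslit δ hδ)
  have h1ulb : ∀ δ ∈ s, 1 / 2 ≤ ‖1 + u δ‖ := by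
    intro δ hδ
    have h1 : ‖(1 : ℂ)‖ - ‖u δ‖ ≤ ‖1 + u δ‖ := norm_lb _ _
    have h2 := huhalf δ hδ
    simp only [norm_one] at h1
    linarith
  have hΦnorm : ∀ δ ∈ s, ‖Φ δ‖ ≤ 3 * A / (π * nr) := by
    intro δ hδ
    rw [hΦdef]
    simp only
    rw [norm_mul, norm_neg, Complex.norm_I, one_mul]
    have h := Complex.norm_log_one_add_half_le_self (huhalf δ hδ)
    have h2 := hub δ hδ
    calc ‖Complex.log (1 + u δ)‖ ≤ 3 / 2 * ‖u δ‖ := h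
      _ ≤ 3 / 2 * (2 * A / (π * nr)) := by nlinarith
      _ = 3 * A / (π * nr) := by ring
  have hΦmem : ∀ δ ∈ s, Φ δ ∈ s := by
    intro δ hδ
    rw [hmem]
    have h := hΦnorm δ hδ
    have h2 : 3 * A / (π * nr) ≤ r := by
      rw [hrdef, div_div]
      gcongr
      linarith
    linarith
  -- derivative of Φ
  set Φ' : ℂ → ℂ := fun δ => -I * (((0 * w δ - 2 * a * 1) / w δ ^ 2) / (1 + u δ)) with hΦ'def
  have hderiv : ∀ δ ∈ s, HasDerivAt Φ (Φ' δ) δ := by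
    intro δ hδ
    have hw' : HasDerivAt w 1 δ := by
      rw [hwdef]
      simpa using ((hasDerivAt_id δ).const_add (2 * (π : ℂ) * n)).sub_const a
    have hu' : HasDerivAt u ((0 * w δ - 2 * a * 1) / w δ ^ 2) δ := by
      rw [hudef]
      exact (hasDerivAt_const δ (2 * a)).div hw' (hwne δ hδ)
    have h1u' : HasDerivAt (fun x => 1 + u x) ((0 * w δ - 2 * a * 1) / w δ ^ 2) δ :=
      hu'.const_add 1
    have hlog : HasDerivAt (fun x => Complex.log (1 + u x))
        (((0 * w δ - 2 * a * 1) / w δ ^ 2) / (1 + u δ)) δ := h1u'.clog (hslit δ hδ)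
    rw [hΦdef, hΦ'def]
    exact hlog.const_mul (-I)
  have hΦ'le : ∀ δ ∈ s, ‖Φ' δ‖ ≤ 1 / 2 := by
    intro δ hδ
    rw [hΦ'def]
    simp only
    have he : (0 : ℂ) * w δ - 2 * a * 1 = -(2 * a) := by ring
    rw [he, norm_mul, norm_neg, Complex.norm_I, one_mul, norm_div, norm_div, norm_neg]
    have h2a : ‖(2 : ℂ) * a‖ = 2 * A := by rw [norm_mul, hAdef]; norm_num
    have hwsq : ‖w δ ^ 2‖ = ‖w δ‖ ^ 2 := by rw [norm_pow]
    rw [h2a, hwsq]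
    have hwl := hwlb δ hδ
    have h1l := h1ulb δ hδ
    have hw0 : (0:ℝ) < ‖w δ‖ := lt_of_lt_of_le (mul_pos hπ0 hn0) hwl
    have h1u0 : (0:ℝ) < ‖1 + u δ‖ := by linarith
    have hπnr0 : (0:ℝ) < π * nr := mul_pos hπ0 hn0
    have step1a : 2 * A / ‖w δ‖ ^ 2 ≤ 2 * A / (π * nr) ^ 2 := by
      rw [div_le_div_iff₀ (by positivity) (by positivity)]
      have hsq : (π*nr)^2 ≤ ‖w δ‖^2 := by nlinarith
      nlinarith [mul_le_mul_of_nonneg_left hsq (by linarith : (0:ℝ) ≤ 2*A)]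
    have step1 : 2 * A / ‖w δ‖ ^ 2 / ‖1 + u δ‖ ≤ 2 * A / (π * nr) ^ 2 / (1/2) := by
      apply div_le_div₀ (div_nonneg (by nlinarith) (by positivity)) step1a (by norm_num) h1l
    have step3 : 2 * A / (π * nr) ^ 2 / (1/2) = 4 * A / (π * nr) ^ 2 := by ring
    have step4 : 4 * A / (π * nr) ^ 2 ≤ 1 / 2 := by
      rw [div_le_div_iff₀ (by positivity) (by norm_num)]
      have hππ : (9:ℝ) ≤ π*π := by nlinarith
      have hnrnr : 4*A ≤ nr*nr := by nlinarith
      have hprod : 9*(4*A) ≤ (π*π)*(nr*nr) :=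
        mul_le_mul hππ hnrnr (by linarith) (by linarith)
      nlinarith
    linarith
  have hlip : ∀ x ∈ s, ∀ y ∈ s, ‖Φ y - Φ x‖ ≤ 1 / 2 * ‖y - x‖ := by
    intro x hx y hy
    exact (convex_closedBall (0:ℂ) r).norm_image_sub_le_of_norm_hasDerivWithin_le
      (fun δ hδ => (hderiv δ hδ).hasDerivWithinAt) hΦ'le hx hy
  have hmaps : Set.MapsTo Φ s s := hΦmem
  have hcontr : ContractingWith (1/2 : NNReal) (hmaps.restrict Φ s s) := by
    constructor
    · have h12 : ((1/2 : NNReal) : ℝ) < 1 := by norm_num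
      exact_mod_cast h12
    · apply LipschitzWith.of_dist_le_mul
      rintro ⟨x, hx⟩ ⟨y, hy⟩
      have h := hlip y hy x hx
      simp only [Subtype.dist_eq, Set.MapsTo.val_restrict_apply, dist_eq_norm]
      have hc : ((1/2 : NNReal) : ℝ) = 1/2 := by norm_num
      rw [hc]
      exact h
  have hsc : IsComplete s := Metric.isClosed_closedBall.isComplete
  have h0s : (0 : ℂ) ∈ s := Metric.mem_closedBall_self hr0.le
  obtain ⟨δ₀, hδ₀s, hfix, -, -⟩ :=
    hcontr.exists_fixedPoint' hsc hmaps h0s (edist_ne_top _ _)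
  have hδ₀r : ‖δ₀‖ ≤ r := (hmem δ₀).mp hδ₀s
  have hfix' : -I * Complex.log (1 + u δ₀) = δ₀ := by
    rw [hΦdef] at hfix; exact hfix
  have hIcancel : ∀ z : ℂ, I * (-I * z) = z := by
    intro z
    rw [← mul_assoc, mul_neg, Complex.I_mul_I, neg_neg, one_mul]
  have hlog0 : Complex.log (1 + u δ₀) = I * δ₀ := by
    conv_lhs => rw [← hIcancel (Complex.log (1 + u δ₀)), hfix']
  have hexpδ : exp (I * δ₀) = 1 + u δ₀ := by
    rw [← hlog0, Complex.exp_log (h1une δ₀ hδ₀s)]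
  have hexp2πn : exp (I * (2 * (π : ℂ) * n)) = 1 := by
    rw [show I * (2 * (π : ℂ) * n) = (n : ℂ) * (2 * (π : ℂ) * I) by ring]
    exact Complex.exp_int_mul_two_pi_mul_I n
  set m : ℂ := 2 * (π : ℂ) * n + δ₀ with hmdef
  have hm2πn : m - 2 * (π : ℂ) * n = δ₀ := by rw [hmdef]; ring
  have hexpm : exp (I * m) = 1 + u δ₀ := by
    rw [hmdef, show I * (2 * (π : ℂ) * n + δ₀) = I * (2 * (π : ℂ) * n) + I * δ₀ by ring,
      Complex.exp_add, hexp2πn, one_mul, hexpδ]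
  have hzlb : ∀ δ : ℂ, ‖δ‖ ≤ r → (2 * (π : ℂ) * n + δ ≠ 0) := by
    intro δ hδr
    have h1 : ‖(2 * (π : ℂ) * n : ℂ)‖ - ‖δ‖ ≤ ‖2 * (π : ℂ) * n + δ‖ := norm_lb _ _
    rw [hnorm2πn] at h1
    have : 0 < ‖2 * (π : ℂ) * n + δ‖ := by nlinarith
    exact norm_pos_iff.mp this
  have hm0 : m ≠ 0 := hzlb δ₀ hδ₀r
  have hwδ₀m : w δ₀ = m - a := by rw [hwdef, hmdef]
  have hwδ₀ne : w δ₀ ≠ 0 := hwne δ₀ hδ₀s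
  have hmane : m - a ≠ 0 := by rw [← hwδ₀m]; exact hwδ₀ne
  have huδ₀ : u δ₀ = 2 * a / (m - a) := by rw [hudef, hmdef]
  refine ⟨m, ?_, ?_, ?_, ?_⟩
  · -- f m = 0
    rw [hexpm, huδ₀]
    field_simp
    ring
  · rw [hm2πn]; exact hδ₀r
  · -- uniqueness
    intro z hz hzb
    set δ' : ℂ := z - 2 * (π : ℂ) * n with hδ'def
    have hδ'r : ‖δ'‖ ≤ r := hzb
    have hδ's : δ' ∈ s := (hmem δ').mpr hδ'r
    have hzeq : z = 2 * (π : ℂ) * n + δ' := by rw [hδ'def]; ring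
    have hz0 : z ≠ 0 := by rw [hzeq]; exact hzlb δ' hδ'r
    have hwδ' : w δ' = z - a := by rw [hwdef]; simp only; rw [hδ'def]; ring
    have hwδ'ne : w δ' ≠ 0 := hwne δ' hδ's
    have hzane : z - a ≠ 0 := by rw [← hwδ']; exact hwδ'ne
    have h1 : exp (I * z) - 1 = a * (exp (I * z) + 1) / z := sub_eq_zero.mp (by
      linear_combination hz)
    have h2 : exp (I * z) * (z - a) = z + a := by
      field_simp at h1
      linear_combination h1
    have hE : exp (I * z) = 1 + u δ' := by
      rw [hudef]; simp only; rw [hwδ']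
      field_simp
      linear_combination h2
    have hEδ : exp (I * δ') = 1 + u δ' := by
      rw [← hE, hzeq, show I * (2 * (π : ℂ) * n + δ') = I * (2 * (π : ℂ) * n) + I * δ' by ring,
        Complex.exp_add, hexp2πn, one_mul]
    have him : (I * δ').im = δ'.re := by simp
    have hrebound : |δ'.re| ≤ ‖δ'‖ := Complex.abs_re_le_norm δ'
    have hre2 := abs_le.mp hrebound
    have hlogδ' : Complex.log (1 + u δ') = I * δ' := by
      rw [← hEδ, Complex.log_exp]
      · rw [him]; linarith
      · rw [him]; linarith
    have hΦδ' : Φ δ' = δ' := by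
      rw [hΦdef]; simp only
      rw [hlogδ', ← mul_assoc, neg_mul, Complex.I_mul_I, neg_neg, one_mul]
    have hd := hlip δ₀ hδ₀s δ' hδ's
    rw [hΦδ', hfix] at hd
    have hnn : (0:ℝ) ≤ ‖δ' - δ₀‖ := norm_nonneg _
    have h0 : ‖δ' - δ₀‖ = 0 := by linarith
    have h5 : δ' = δ₀ := sub_eq_zero.mp (norm_eq_zero.mp h0)
    rw [hzeq, h5, ← hmdef]
  · -- asymptotics
    have hu1 : ‖u δ₀‖ < 1 := lt_of_le_of_lt (huhalf δ₀ hδ₀s) (by norm_num)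
    have hL := Complex.norm_log_one_add_sub_self_le hu1
    have hu2 := huhalf δ₀ hδ₀s
    have hub0 := hub δ₀ hδ₀s
    have hun0 : (0:ℝ) ≤ ‖u δ₀‖ := norm_nonneg _
    have hinv : (1 - ‖u δ₀‖)⁻¹ ≤ 2 := by
      rw [inv_le_comm₀ (by linarith) (by norm_num)]
      linarith
    have hLu : ‖Complex.log (1 + u δ₀) - u δ₀‖ ≤ ‖u δ₀‖ ^ 2 := by
      have hsq : (0:ℝ) ≤ ‖u δ₀‖ ^ 2 := sq_nonneg _
      nlinarith
    have hπc : ((π : ℝ) : ℂ) ≠ 0 := Complex.ofReal_ne_zero.mpr (ne_of_gt hπ0)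
    have hπnz : ((π : ℂ) * n : ℂ) ≠ 0 := mul_ne_zero hπc hnz
    have hwne2 : 2 * (π : ℂ) * n + δ₀ - a ≠ 0 := by
      have h := hwδ₀ne; rw [hwdef] at h; exact h
    have hALG : u δ₀ - a * (a - δ₀) / (w δ₀ * ((π : ℂ) * n)) = a * (1 / ((π : ℂ) * n)) := by
      rw [hudef, hwdef]
      simp only
      field_simp
      ring
    have hdecomp : m - 2 * (π : ℂ) * n - (-I * a) * (1 / ((π : ℂ) * n)) =
        -I * (Complex.log (1 + u δ₀) - u δ₀) + -I * (a * (a - δ₀) / (w δ₀ * ((π : ℂ) * n))) := by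
      rw [hm2πn]
      linear_combination (-1 : ℂ) * hfix' + (-I) * hALG
    rw [hdecomp]
    have hX : ‖a * (a - δ₀) / (w δ₀ * ((π : ℂ) * n))‖ ≤ A * (A + 1) / (π * nr * (π * nr)) := by
      have hwl := hwlb δ₀ hδ₀s
      have hπnr0 : (0:ℝ) < π * nr := mul_pos hπ0 hn0
      have hw0 : (0:ℝ) < ‖w δ₀‖ := lt_of_lt_of_le hπnr0 hwl
      have haδ : ‖a - δ₀‖ ≤ A + 1 := by
        have h := norm_sub_le a δ₀
        rw [← hAdef] at h
        linarith
      rw [norm_div, norm_mul, norm_mul, hnormπn, ← hAdef,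
        div_le_div_iff₀ (mul_pos hw0 hπnr0) (mul_pos hπnr0 hπnr0)]
      have hprod : ‖a - δ₀‖ * (π * nr) ≤ (A + 1) * ‖w δ₀‖ :=
        mul_le_mul haδ hwl hπnr0.le (by linarith)
      nlinarith [mul_le_mul_of_nonneg_left hprod (by nlinarith : (0:ℝ) ≤ A * (π * nr))]
    have hLu2 : ‖u δ₀‖ ^ 2 ≤ (2 * A / (π * nr)) ^ 2 := by nlinarith
    calc ‖-I * (Complex.log (1 + u δ₀) - u δ₀) + -I * (a * (a - δ₀) / (w δ₀ * ((π : ℂ) * n)))‖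
        ≤ ‖-I * (Complex.log (1 + u δ₀) - u δ₀)‖ +
          ‖-I * (a * (a - δ₀) / (w δ₀ * ((π : ℂ) * n)))‖ := norm_add_le _ _
      _ = ‖Complex.log (1 + u δ₀) - u δ₀‖ + ‖a * (a - δ₀) / (w δ₀ * ((π : ℂ) * n))‖ := by
          rw [norm_mul, norm_mul]
          simp
      _ ≤ (2 * A / (π * nr)) ^ 2 + A * (A + 1) / (π * nr * (π * nr)) := by
          have := hLu
          linarith
      _ ≤ (6 * A ^ 2 + 1) / nr ^ 2 := by
          have hπnr0 : (0:ℝ) < π * nr := mul_pos hπ0 hn0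
          have hcom : (2 * A / (π * nr)) ^ 2 + A * (A + 1) / (π * nr * (π * nr)) =
              (4 * A ^ 2 + A * (A + 1)) / ((π * nr) * (π * nr)) := by ring
          rw [hcom, div_le_div_iff₀ (mul_pos hπnr0 hπnr0) (pow_pos hn0 2)]
          have h9 : (9:ℝ) ≤ π * π := by nlinarith
          have h99 : 9 * (nr * nr) ≤ (π * nr) * (π * nr) := by nlinarith
          have hstep : (6 * A ^ 2 + 1) * (9 * (nr * nr)) ≤
              (6 * A ^ 2 + 1) * ((π * nr) * (π * nr)) :=
            mul_le_mul_of_nonneg_left h99 (by positivity)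
          nlinarith [hstep, mul_pos hn0 hn0, sq_nonneg (A - 1),
            mul_le_mul_of_nonneg_right (sq_nonneg (A - 1)) (mul_pos hn0 hn0).le,
            mul_nonneg (sq_nonneg A) (mul_pos hn0 hn0).le]
      _ = (6 * A ^ 2 + 1) / (n : ℝ) ^ 2 := by rw [hnrdef, _root_.sq_abs]

theorem stmt_3 (β₁ β₂ : ℂ) (hβ₁ : β₁ ≠ 1) (hβ₂ : β₂ ≠ 0)
    (f : ℂ → ℂ)
    (hf : ∀ μ : ℂ, f μ = exp (I * μ) - 1 - (I * β₂ / (β₁ - 1)) * (exp (I * μ) + 1) / μ) :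
    ∃ (C K : ℝ) (N : ℕ) (μ : ℤ → ℂ), 0 < C ∧ 0 < K ∧
      ∀ n : ℤ, (N : ℤ) ≤ |n| →
        f (μ n) = 0 ∧
        ‖μ n - 2 * π * n‖ ≤ C / |(n : ℝ)| ∧
        (∀ z : ℂ, f z = 0 → ‖z - 2 * π * n‖ ≤ C / |(n : ℝ)| → z = μ n) ∧
        ‖μ n - 2 * π * n - (β₂ / (β₁ - 1)) * (1 / (π * n))‖ ≤ K / (n : ℝ) ^ 2 := by
  have hβ₁' : β₁ - 1 ≠ 0 := sub_ne_zero.mpr hβ₁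
  set a : ℂ := I * β₂ / (β₁ - 1) with hadef
  have ha : a ≠ 0 := by
    rw [hadef]
    exact div_ne_zero (mul_ne_zero Complex.I_ne_zero hβ₂) hβ₁'
  have hba : β₂ / (β₁ - 1) = -I * a := by
    rw [hadef]
    field_simp
    linear_combination Complex.I_sq
  set A : ℝ := ‖a‖ with hAdef
  have hA0 : 0 < A := norm_pos_iff.mpr ha
  have hπ0 : (0 : ℝ) < π := Real.pi_pos
  refine ⟨4 * A / π, 6 * A ^ 2 + 1, ⌈4 * A / π + 2 * A + 2⌉₊, ?_⟩
  have H : ∀ n : ℤ, ∃ m : ℂ, ((⌈4 * A / π + 2 * A + 2⌉₊ : ℤ) ≤ |n| →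
      (f m = 0 ∧
        ‖m - 2 * π * n‖ ≤ (4 * A / π) / |(n : ℝ)| ∧
        (∀ z : ℂ, f z = 0 → ‖z - 2 * π * n‖ ≤ (4 * A / π) / |(n : ℝ)| → z = m) ∧
        ‖m - 2 * π * n - (β₂ / (β₁ - 1)) * (1 / (π * n))‖ ≤ (6 * A ^ 2 + 1) / (n : ℝ) ^ 2)) := by
    intro n
    by_cases hn : (⌈4 * A / π + 2 * A + 2⌉₊ : ℤ) ≤ |n|
    · have hn' : 4 * A / π + 2 * A + 2 ≤ |(n : ℝ)| := by
        have h1 : ((⌈4 * A / π + 2 * A + 2⌉₊ : ℝ)) ≤ ((|n| : ℤ) : ℝ) := by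
          exact_mod_cast hn
        have h2 : ((|n| : ℤ) : ℝ) = |(n : ℝ)| := by push_cast; ring
        have h3 := Nat.le_ceil (4 * A / π + 2 * A + 2)
        rw [h2] at h1
        linarith
      obtain ⟨m, hm1, hm2, hm3, hm4⟩ := key_lemma a ha n hn'
      refine ⟨m, fun _ => ⟨?_, hm2, ?_, ?_⟩⟩
      · rw [hf m]; exact hm1
      · intro z hz hzb
        exact hm3 z (by rw [hf z] at hz; exact hz) hzb
      · rw [hba]; exact hm4
    · exact ⟨0, fun h => absurd h hn⟩
  choose μ hμ using H
  exact ⟨μ, div_pos (by nlinarith) hπ0, by positivity, fun n hn => hμ n hn⟩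
end

section
/- Let q be absolutely continuous on [0,1] and let μ_n be any sequence with |μ_n − 2πn| ≤ C/n for some constant C. Then s_{μ_n} := ∫₀¹ sin(2μ_n t) q(t) dt = (1/(2μ_n))[q(0) − q(1)] + o(1/n) and c_{μ_n} := ∫₀¹ cos(2μ_n t) q(t) dt = o(1/n) as n → ∞. -/
open Complex Real Filter Asymptotics MeasureTheory Set Topology
open scoped FourierTransform

lemma hasDerivAt_coslin (z : ℂ) (t : ℝ) :
    HasDerivAt (fun t : ℝ => Complex.cos (z * t)) (-Complex.sin (z * t) * z) t := by
  have h : HasDerivAt (fun y : ℂ => Complex.cos (z * y)) (-Complex.sin (z * t) * z) (t : ℂ) := by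
    simpa using ((hasDerivAt_id ((t : ℝ) : ℂ)).const_mul z).ccos
  exact h.comp_ofReal

lemma hasDerivAt_sinlin (z : ℂ) (t : ℝ) :
    HasDerivAt (fun t : ℝ => Complex.sin (z * t)) (Complex.cos (z * t) * z) t := by
  have h : HasDerivAt (fun y : ℂ => Complex.sin (z * y)) (Complex.cos (z * t) * z) (t : ℂ) := by
    simpa using ((hasDerivAt_id ((t : ℝ) : ℂ)).const_mul z).csin
  exact h.comp_ofReal

lemma int_sin_closed (z : ℂ) (hz : z ≠ 0) (s : ℝ) :
    ∫ t in s..1, Complex.sin (z * t) = (Complex.cos (z * s) - Complex.cos z) / z := by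
  have h : ∀ t ∈ Set.uIcc s 1, HasDerivAt (fun t : ℝ => -Complex.cos (z * t) / z)
      (Complex.sin (z * t)) t := by
    intro t _
    have := (hasDerivAt_coslin z t).neg.div_const z
    exact this.congr_deriv (by field_simp)
  rw [intervalIntegral.integral_eq_sub_of_hasDerivAt h
    ((Complex.continuous_sin.comp (continuous_const.mul Complex.continuous_ofReal)).intervalIntegrable s 1)]
  push_cast
  field_simp
  ring

lemma int_cos_closed (z : ℂ) (hz : z ≠ 0) (s : ℝ) :
    ∫ t in s..1, Complex.cos (z * t) = (Complex.sin z - Complex.sin (z * s)) / z := by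
  have h : ∀ t ∈ Set.uIcc s 1, HasDerivAt (fun t : ℝ => Complex.sin (z * t) / z)
      (Complex.cos (z * t)) t := by
    intro t _
    have := (hasDerivAt_sinlin z t).div_const z
    exact this.congr_deriv (by field_simp)
  rw [intervalIntegral.integral_eq_sub_of_hasDerivAt h
    ((Complex.continuous_cos.comp (continuous_const.mul Complex.continuous_ofReal)).intervalIntegrable s 1)]
  push_cast
  field_simp

lemma swap_triangle (f g : ℝ → ℂ) (hf : Continuous f) (hg : IntegrableOn g (Set.Ioc 0 1)) :
    ∫ t in (0:ℝ)..1, f t * ∫ s in (0:ℝ)..t, g s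
      = ∫ s in (0:ℝ)..1, (∫ t in s..1, f t) * g s := by
  set I : Set ℝ := Set.Ioc 0 1 with hI
  set vI : Measure ℝ := volume.restrict I with hvI
  set Φ : ℝ × ℝ → ℂ := Set.indicator {p : ℝ × ℝ | p.2 ≤ p.1} (fun p => f p.1 * g p.2) with hΦ
  have hs : MeasurableSet {p : ℝ × ℝ | p.2 ≤ p.1} := measurableSet_le measurable_snd measurable_fst
  have hΦm : AEStronglyMeasurable Φ (vI.prod vI) := by
    apply AEStronglyMeasurable.indicator _ hs
    exact (hf.aestronglyMeasurable.restrict.comp_fst).mul hg.aestronglyMeasurable.comp_snd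
  obtain ⟨M, hM⟩ := isCompact_Icc.exists_bound_of_continuousOn (hf.continuousOn (s := Set.Icc (0:ℝ) 1))
  have hΦi : Integrable Φ (vI.prod vI) := by
    apply Integrable.mono' ((integrable_const M (μ := vI)).mul_prod hg.norm)
    · exact hΦm
    · rw [hvI, Measure.prod_restrict]
      filter_upwards [ae_restrict_mem (measurableSet_Ioc.prod measurableSet_Ioc)] with p hp
      calc ‖Φ p‖ ≤ ‖f p.1 * g p.2‖ := norm_indicator_le_norm_self _ _
        _ = ‖f p.1‖ * ‖g p.2‖ := norm_mul _ _
        _ ≤ M * ‖g p.2‖ := by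
            apply mul_le_mul_of_nonneg_right _ (norm_nonneg _)
            exact hM _ (Set.Ioc_subset_Icc_self hp.1)
  have hswap := MeasureTheory.integral_integral_swap
    (f := fun t s => Φ (t, s)) (μ := vI) (ν := vI) hΦi
  have hL : ∫ t, (∫ s, Φ (t, s) ∂vI) ∂vI = ∫ t in (0:ℝ)..1, f t * ∫ s in (0:ℝ)..t, g s := by
    rw [intervalIntegral.integral_of_le zero_le_one]
    apply integral_congr_ae
    filter_upwards [ae_restrict_mem measurableSet_Ioc] with t ht
    have h1 : ∀ s : ℝ, Φ (t, s) = Set.indicator (Set.Iic t) (fun s => f t * g s) s := by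
      intro s
      simp only [hΦ, Set.indicator_apply, Set.mem_setOf_eq, Set.mem_Iic]
    simp_rw [h1]
    rw [integral_indicator measurableSet_Iic, hvI, Measure.restrict_restrict measurableSet_Iic]
    have h2 : Set.Iic t ∩ I = Set.Ioc 0 t := by
      rw [hI]; ext x
      simp only [Set.mem_inter_iff, Set.mem_Iic, Set.mem_Ioc]
      constructor
      · rintro ⟨h, h0, _⟩; exact ⟨h0, h⟩
      · rintro ⟨h0, h⟩; exact ⟨h, h0, h.trans ht.2⟩
    rw [h2, intervalIntegral.integral_of_le ht.1.le, integral_const_mul]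
  have hR : ∫ s, (∫ t, Φ (t, s) ∂vI) ∂vI = ∫ s in (0:ℝ)..1, (∫ t in s..1, f t) * g s := by
    rw [intervalIntegral.integral_of_le zero_le_one]
    apply integral_congr_ae
    filter_upwards [ae_restrict_mem measurableSet_Ioc] with s hsm
    have h1 : ∀ t : ℝ, Φ (t, s) = Set.indicator (Set.Ici s) (fun t => f t * g s) t := by
      intro t
      simp only [hΦ, Set.indicator_apply, Set.mem_setOf_eq, Set.mem_Ici]
    simp_rw [h1]
    rw [integral_indicator measurableSet_Ici, hvI, Measure.restrict_restrict measurableSet_Ici]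
    have h2 : Set.Ici s ∩ I = Set.Icc s 1 := by
      rw [hI]; ext x
      simp only [Set.mem_inter_iff, Set.mem_Ici, Set.mem_Icc, Set.mem_Ioc]
      constructor
      · rintro ⟨h, _, h1⟩; exact ⟨h, h1⟩
      · rintro ⟨h, h1⟩; exact ⟨h, hsm.1.trans_le h, h1⟩
    rw [h2, integral_Icc_eq_integral_Ioc, ← intervalIntegral.integral_of_le hsm.2,
      ← intervalIntegral.integral_mul_const]
  rw [← hL, ← hR, hswap]

lemma RL1 (g : ℝ → ℂ) (hg : IntegrableOn g (Set.Ioc 0 1)) {s : ℕ → ℝ}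
    (hs : Tendsto s atTop (cocompact ℝ)) :
    Tendsto (fun n => ∫ t in (0:ℝ)..1, Complex.exp (2 * π * s n * t * Complex.I) * g t)
      atTop (𝓝 0) := by
  set G : ℝ → ℂ := Set.indicator (Set.Ioc 0 1) g with hG
  have hRL := Real.tendsto_integral_exp_smul_cocompact (f := G)
  have hneg : Tendsto (fun x : ℝ => -x) (cocompact ℝ) (cocompact ℝ) :=
    le_of_eq ((Homeomorph.neg ℝ).map_cocompact)
  have hcomp : Tendsto (fun n => ∫ v : ℝ, 𝐞 (-(v * (-s n))) • G v) atTop (𝓝 0) :=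
    hRL.comp (hneg.comp hs)
  have heq : ∀ n, (∫ v : ℝ, 𝐞 (-(v * (-s n))) • G v)
      = ∫ t in (0:ℝ)..1, Complex.exp (2 * π * s n * t * Complex.I) * g t := by
    intro n
    rw [intervalIntegral.integral_of_le zero_le_one, ← integral_indicator measurableSet_Ioc]
    apply integral_congr_ae
    filter_upwards with v
    rw [Circle.smul_def, Real.fourierChar_apply]
    simp only [hG]
    by_cases hv : v ∈ Set.Ioc (0:ℝ) 1
    · rw [Set.indicator_of_mem hv, Set.indicator_of_mem hv]
      congr 2
      push_cast
      ring
    · rw [Set.indicator_of_notMem hv, Set.indicator_of_notMem hv, smul_zero]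
  simpa only [heq] using hcomp

lemma RL2 (g : ℝ → ℂ) (hg : IntegrableOn g (Set.Ioc 0 1)) {s : ℕ → ℝ}
    (hs : Tendsto s atTop (cocompact ℝ)) (a : ℕ → ℂ)
    (hconv : Tendsto (fun n => a n - 2 * π * s n) atTop (𝓝 0)) :
    Tendsto (fun n => ∫ t in (0:ℝ)..1, Complex.exp (a n * t * Complex.I) * g t)
      atTop (𝓝 0) := by
  have hgi : IntervalIntegrable g volume 0 1 :=
    (intervalIntegrable_iff_integrableOn_Ioc_of_le zero_le_one).2 hg
  set d : ℕ → ℂ := fun n => a n - 2 * π * s n with hd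
  have hint : ∀ (c : ℂ), IntervalIntegrable (fun t : ℝ => Complex.exp (c * t * Complex.I) * g t)
      volume 0 1 := by
    intro c
    apply hgi.continuousOn_mul
    exact ((Complex.continuous_exp.comp
      ((continuous_const.mul Complex.continuous_ofReal).mul continuous_const))).continuousOn
  have key : Tendsto (fun n => (∫ t in (0:ℝ)..1, Complex.exp (a n * t * Complex.I) * g t)
      - ∫ t in (0:ℝ)..1, Complex.exp (2 * π * s n * t * Complex.I) * g t) atTop (𝓝 0) := by
    have hdt : Tendsto d atTop (𝓝 0) := hconv
    have hdt0 : Tendsto (fun n => ‖d n‖) atTop (𝓝 0) := by simpa using hdt.norm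
    have hev : ∀ᶠ n in atTop, ‖d n‖ ≤ 1 := by
      filter_upwards [hdt0.eventually_lt_const (by norm_num : (0:ℝ) < 1)] with n h using h.le
    apply squeeze_zero_norm'
      (a := fun n => 2 * ‖d n‖ * ∫ t in (0:ℝ)..1, ‖g t‖)
    · filter_upwards [hev] with n hn
      rw [← intervalIntegral.integral_sub (hint _) (hint _)]
      calc ‖∫ t in (0:ℝ)..1, (Complex.exp (a n * t * Complex.I) * g t
              - Complex.exp (2 * π * s n * t * Complex.I) * g t)‖
          ≤ ∫ t in (0:ℝ)..1, ‖Complex.exp (a n * t * Complex.I) * g t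
              - Complex.exp (2 * π * s n * t * Complex.I) * g t‖ :=
            intervalIntegral.norm_integral_le_integral_norm zero_le_one
        _ ≤ ∫ t in (0:ℝ)..1, 2 * ‖d n‖ * ‖g t‖ := by
            apply intervalIntegral.integral_mono_on zero_le_one
              ((hint _).sub (hint _)).norm (hgi.norm.const_mul _)
            intro t ht
            have habs1 : ‖Complex.exp (2 * π * s n * t * Complex.I)‖ = 1 := by
              have : (2 * π * s n : ℂ) * t * Complex.I = ((2 * π * s n * t : ℝ) : ℂ) * Complex.I := by
                push_cast; ring
              rw [this]
              exact Complex.norm_exp_ofReal_mul_I _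
            have hsplit : Complex.exp (a n * t * Complex.I)
                - Complex.exp (2 * π * s n * t * Complex.I)
                = Complex.exp (2 * π * s n * t * Complex.I) * (Complex.exp (d n * t * Complex.I) - 1) := by
              rw [mul_sub, mul_one, ← Complex.exp_add]
              congr 1
              simp only [hd]
              ring
            have hdnorm : ‖(d n : ℂ) * t * Complex.I‖ ≤ ‖d n‖ := by
              rw [norm_mul, norm_mul, Complex.norm_I, mul_one, Complex.norm_real]
              calc ‖d n‖ * ‖t‖ ≤ ‖d n‖ * 1 := by
                    apply mul_le_mul_of_nonneg_left _ (norm_nonneg _)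
                    rw [Real.norm_eq_abs, abs_le]
                    exact ⟨by linarith [ht.1], ht.2⟩
                _ = ‖d n‖ := mul_one _
            have hexp : ‖Complex.exp (d n * t * Complex.I) - 1‖ ≤ 2 * ‖d n‖ := by
              have h2 := Complex.norm_exp_sub_one_le (x := d n * t * Complex.I)
                (by exact hdnorm.trans hn)
              exact h2.trans (by nlinarith [norm_nonneg (d n)])
            calc ‖Complex.exp (a n * t * Complex.I) * g t
                  - Complex.exp (2 * π * s n * t * Complex.I) * g t‖
                = ‖Complex.exp (a n * t * Complex.I)
                  - Complex.exp (2 * π * s n * t * Complex.I)‖ * ‖g t‖ := by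
                  rw [← sub_mul, norm_mul]
              _ ≤ 2 * ‖d n‖ * ‖g t‖ := by
                  apply mul_le_mul_of_nonneg_right _ (norm_nonneg _)
                  rw [hsplit, norm_mul, habs1, one_mul]
                  exact hexp
        _ = 2 * ‖d n‖ * ∫ t in (0:ℝ)..1, ‖g t‖ := by
            rw [← intervalIntegral.integral_const_mul]
    · simpa using ((hdt0.const_mul 2).mul_const (∫ t in (0:ℝ)..1, ‖g t‖))
  have := key.add (RL1 g hg hs)
  simpa using this

section Identities
variable (q q' : ℝ → ℂ) (hq' : IntegrableOn q' (Set.Icc 0 1))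
  (hq : ∀ x ∈ Set.Icc (0:ℝ) 1, q x = q 0 + ∫ t in (0:ℝ)..x, q' t)

include hq' hq in
lemma parts_general (f : ℝ → ℂ) (hf : Continuous f) :
    ∫ t in (0:ℝ)..1, f t * q t
      = (∫ t in (0:ℝ)..1, f t) * q 0 + ∫ s in (0:ℝ)..1, (∫ t in s..1, f t) * q' s := by
  have hq'Ioc : IntegrableOn q' (Set.Ioc 0 1) := hq'.mono_set Set.Ioc_subset_Icc_self
  have hPcont : ContinuousOn (fun x => ∫ t in (0:ℝ)..x, q' t) (Set.uIcc 0 1) := by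
    apply intervalIntegral.continuousOn_primitive_interval
    rwa [Set.uIcc_of_le zero_le_one]
  have i1 : IntervalIntegrable (fun t : ℝ => f t * q 0) volume 0 1 :=
    (hf.mul continuous_const).intervalIntegrable 0 1
  have i2 : IntervalIntegrable (fun t : ℝ => f t * ∫ s in (0:ℝ)..t, q' s) volume 0 1 :=
    (hf.continuousOn.mul hPcont).intervalIntegrable
  have step1 : ∫ t in (0:ℝ)..1, f t * q t
      = ∫ t in (0:ℝ)..1, (f t * q 0 + f t * ∫ s in (0:ℝ)..t, q' s) := by
    apply intervalIntegral.integral_congr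
    intro t ht
    rw [Set.uIcc_of_le zero_le_one] at ht
    dsimp only
    rw [hq t ht]
    ring
  rw [step1, intervalIntegral.integral_add i1 i2, intervalIntegral.integral_mul_const,
    swap_triangle f q' hf hq'Ioc]

include hq in
lemma int_q' : ∫ s in (0:ℝ)..1, q' s = q 1 - q 0 := by
  rw [hq 1 (Set.mem_Icc.2 ⟨zero_le_one, le_refl 1⟩)]
  ring

include hq' hq in
lemma id_sin (z : ℂ) (hz : z ≠ 0) :
    ∫ t in (0:ℝ)..1, Complex.sin (z * t) * q t
      = (q 0 - q 1 * Complex.cos z + ∫ s in (0:ℝ)..1, Complex.cos (z * s) * q' s) / z := by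
  have hq'' : IntervalIntegrable q' volume 0 1 :=
    (intervalIntegrable_iff_integrableOn_Ioc_of_le zero_le_one).2
      (hq'.mono_set Set.Ioc_subset_Icc_self)
  have hfc : Continuous (fun t : ℝ => Complex.sin (z * t)) :=
    Complex.continuous_sin.comp (continuous_const.mul Complex.continuous_ofReal)
  have hgc : Continuous (fun t : ℝ => Complex.cos (z * t)) :=
    Complex.continuous_cos.comp (continuous_const.mul Complex.continuous_ofReal)
  rw [parts_general q q' hq' hq _ hfc]
  have e0 : ∫ t in (0:ℝ)..1, Complex.sin (z * t) = (1 - Complex.cos z) / z := by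
    rw [int_sin_closed z hz 0]
    norm_num
  have e1 : ∫ s in (0:ℝ)..1, (∫ t in s..1, Complex.sin (z * t)) * q' s
      = ∫ s in (0:ℝ)..1, (z⁻¹ * (Complex.cos (z * s) * q' s) - Complex.cos z / z * q' s) := by
    apply intervalIntegral.integral_congr
    intro s _
    dsimp only
    rw [int_sin_closed z hz s]
    field_simp
  have ia : IntervalIntegrable (fun s : ℝ => z⁻¹ * (Complex.cos (z * s) * q' s)) volume 0 1 :=
    (hq''.continuousOn_mul hgc.continuousOn).const_mul _
  have ib : IntervalIntegrable (fun s : ℝ => Complex.cos z / z * q' s) volume 0 1 :=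
    hq''.const_mul _
  rw [e0, e1, intervalIntegral.integral_sub ia ib, intervalIntegral.integral_const_mul,
    intervalIntegral.integral_const_mul, int_q' q q' hq]
  field_simp
  ring

include hq' hq in
lemma id_cos (z : ℂ) (hz : z ≠ 0) :
    ∫ t in (0:ℝ)..1, Complex.cos (z * t) * q t
      = (Complex.sin z * q 1 - ∫ s in (0:ℝ)..1, Complex.sin (z * s) * q' s) / z := by
  have hq'' : IntervalIntegrable q' volume 0 1 :=
    (intervalIntegrable_iff_integrableOn_Ioc_of_le zero_le_one).2
      (hq'.mono_set Set.Ioc_subset_Icc_self)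
  have hfc : Continuous (fun t : ℝ => Complex.sin (z * t)) :=
    Complex.continuous_sin.comp (continuous_const.mul Complex.continuous_ofReal)
  have hgc : Continuous (fun t : ℝ => Complex.cos (z * t)) :=
    Complex.continuous_cos.comp (continuous_const.mul Complex.continuous_ofReal)
  rw [parts_general q q' hq' hq _ hgc]
  have e0 : ∫ t in (0:ℝ)..1, Complex.cos (z * t) = Complex.sin z / z := by
    rw [int_cos_closed z hz 0]
    norm_num
  have e1 : ∫ s in (0:ℝ)..1, (∫ t in s..1, Complex.cos (z * t)) * q' s
      = ∫ s in (0:ℝ)..1, (Complex.sin z / z * q' s - z⁻¹ * (Complex.sin (z * s) * q' s)) := by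
    apply intervalIntegral.integral_congr
    intro s _
    dsimp only
    rw [int_cos_closed z hz s]
    field_simp
  have ia : IntervalIntegrable (fun s : ℝ => z⁻¹ * (Complex.sin (z * s) * q' s)) volume 0 1 :=
    (hq''.continuousOn_mul hfc.continuousOn).const_mul _
  have ib : IntervalIntegrable (fun s : ℝ => Complex.sin z / z * q' s) volume 0 1 :=
    hq''.const_mul _
  rw [e0, e1, intervalIntegral.integral_sub ib ia, intervalIntegral.integral_const_mul,
    intervalIntegral.integral_const_mul, int_q' q q' hq]
  field_simp
  ring
end Identities

lemma littleo_helper (f : ℕ → ℂ) (h : Tendsto (fun n : ℕ => (n : ℂ) * f n) atTop (𝓝 0)) :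
    f =o[atTop] fun n : ℕ => 1 / (n : ℝ) := by
  rw [Asymptotics.isLittleO_iff]
  intro c hc
  have h2 : Tendsto (fun n : ℕ => ‖(n : ℂ) * f n‖) atTop (𝓝 0) := by simpa using h.norm
  filter_upwards [h2.eventually_lt_const hc, eventually_ge_atTop 1] with n hn hn1
  have hnpos : (0:ℝ) < n := by exact_mod_cast hn1
  rw [norm_mul, Complex.norm_natCast] at hn
  have : (n:ℝ) * ‖f n‖ ≤ c := hn.le
  have : ‖(1:ℝ) / n‖ = 1 / n := by
    rw [Real.norm_eq_abs, abs_of_pos (by positivity)]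
  rw [this, mul_one_div, le_div_iff₀ hnpos, mul_comm]
  exact hn.le

theorem stmt_8 (q q' : ℝ → ℂ)
    (hq' : IntegrableOn q' (Set.Icc 0 1))
    (hq : ∀ x ∈ Set.Icc (0:ℝ) 1, q x = q 0 + ∫ t in (0:ℝ)..x, q' t)
    (hq0 : ∫ t in (0:ℝ)..1, q t = 0)
    (μ : ℕ → ℂ) (C : ℝ)
    (hμ : ∀ n : ℕ, 1 ≤ n → ‖μ n - 2 * π * n‖ ≤ C / n) :
    ((fun n : ℕ =>
        (∫ t in (0:ℝ)..1, Complex.sin (2 * μ n * t) * q t) -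
          (1 / (2 * μ n)) * (q 0 - q 1))
      =o[atTop] fun n : ℕ => 1 / (n : ℝ)) ∧
    ((fun n : ℕ => ∫ t in (0:ℝ)..1, Complex.cos (2 * μ n * t) * q t)
      =o[atTop] fun n : ℕ => 1 / (n : ℝ)) := by
  have hq'Ioc : IntegrableOn q' (Set.Ioc 0 1) := hq'.mono_set Set.Ioc_subset_Icc_self
  have hq'' : IntervalIntegrable q' volume 0 1 :=
    (intervalIntegrable_iff_integrableOn_Ioc_of_le zero_le_one).2 hq'Ioc
  -- delta tends to zero
  set δ : ℕ → ℂ := fun n => μ n - 2 * π * n with hδdef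
  have hδ : Tendsto δ atTop (𝓝 0) := by
    apply squeeze_zero_norm' (a := fun n : ℕ => C / n)
    · filter_upwards [eventually_ge_atTop 1] with n hn using hμ n hn
    · exact tendsto_const_div_atTop_nhds_zero_nat C
  -- cos (2 μ n) → 1, sin (2 μ n) → 0
  have hper : ∀ n : ℕ, (2 * μ n : ℂ) = 2 * δ n + (2 * n : ℤ) * (2 * π) := by
    intro n
    simp only [hδdef]
    push_cast
    ring
  have hcosz : Tendsto (fun n => Complex.cos (2 * μ n)) atTop (𝓝 1) := by
    have h1 : Tendsto (fun n => Complex.cos (2 * δ n)) atTop (𝓝 1) := by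
      have h0 : Tendsto (fun n => 2 * δ n) atTop (𝓝 0) := by simpa using hδ.const_mul 2
      have := (Complex.continuous_cos.tendsto 0).comp h0
      simpa [Function.comp_def] using this
    apply h1.congr
    intro n
    rw [hper n, Complex.cos_add_int_mul_two_pi]
  have hsinz : Tendsto (fun n => Complex.sin (2 * μ n)) atTop (𝓝 0) := by
    have h1 : Tendsto (fun n => Complex.sin (2 * δ n)) atTop (𝓝 0) := by
      have h0 : Tendsto (fun n => 2 * δ n) atTop (𝓝 0) := by simpa using hδ.const_mul 2
      have := (Complex.continuous_sin.tendsto 0).comp h0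
      simpa [Function.comp_def] using this
    apply h1.congr
    intro n
    rw [hper n, Complex.sin_add_int_mul_two_pi]
  -- exp integrals tend to zero
  have hsP : Tendsto (fun n : ℕ => (2 * n : ℝ)) atTop (cocompact ℝ) := by
    have h1 : Tendsto (fun n : ℕ => (2 * n : ℝ)) atTop atTop :=
      (tendsto_natCast_atTop_atTop (R := ℝ)).const_mul_atTop two_pos
    rw [cocompact_eq_atBot_atTop]
    exact h1.mono_right le_sup_right
  have hsM : Tendsto (fun n : ℕ => (-(2 * n) : ℝ)) atTop (cocompact ℝ) := by
    have h1 : Tendsto (fun n : ℕ => (2 * n : ℝ)) atTop atTop :=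
      (tendsto_natCast_atTop_atTop (R := ℝ)).const_mul_atTop two_pos
    rw [cocompact_eq_atBot_atTop]
    exact (tendsto_neg_atBot_iff.2 h1).mono_right le_sup_left
  have hP : Tendsto (fun n => ∫ t in (0:ℝ)..1,
      Complex.exp (2 * μ n * t * Complex.I) * q' t) atTop (𝓝 0) := by
    apply RL2 q' hq'Ioc hsP
    have : Tendsto (fun n => 2 * δ n) atTop (𝓝 0) := by simpa using hδ.const_mul 2
    apply this.congr
    intro n
    simp only [hδdef]
    push_cast
    ring
  have hM : Tendsto (fun n => ∫ t in (0:ℝ)..1,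
      Complex.exp (-(2 * μ n) * t * Complex.I) * q' t) atTop (𝓝 0) := by
    apply RL2 q' hq'Ioc hsM
    have : Tendsto (fun n => -(2 * δ n)) atTop (𝓝 0) := by simpa using (hδ.const_mul 2).neg
    apply this.congr
    intro n
    simp only [hδdef]
    push_cast
    ring
  -- the q' Fourier-type integrals
  have hintc : ∀ (c : ℂ), IntervalIntegrable (fun t : ℝ => Complex.exp (c * t * Complex.I) * q' t)
      volume 0 1 := by
    intro c
    apply hq''.continuousOn_mul
    exact ((Complex.continuous_exp.comp
      ((continuous_const.mul Complex.continuous_ofReal).mul continuous_const))).continuousOn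
  have hcos_eq : ∀ w : ℂ, Complex.cos w = (Complex.exp (w * Complex.I) + Complex.exp (-w * Complex.I)) / 2 := by
    intro w
    rw [Complex.cos]
  have hsin_eq : ∀ w : ℂ, Complex.sin w = (Complex.exp (-w * Complex.I) - Complex.exp (w * Complex.I)) * Complex.I / 2 := by
    intro w
    rw [Complex.sin]
  have hA : Tendsto (fun n => ∫ s in (0:ℝ)..1, Complex.cos (2 * μ n * s) * q' s) atTop (𝓝 0) := by
    have heq : ∀ n, (∫ s in (0:ℝ)..1, Complex.cos (2 * μ n * s) * q' s)
        = ((∫ t in (0:ℝ)..1, Complex.exp (2 * μ n * t * Complex.I) * q' t)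
          + ∫ t in (0:ℝ)..1, Complex.exp (-(2 * μ n) * t * Complex.I) * q' t) / 2 := by
      intro n
      rw [← intervalIntegral.integral_add (hintc _) (hintc _), ← intervalIntegral.integral_div]
      apply intervalIntegral.integral_congr
      intro t _
      dsimp only
      rw [hcos_eq]
      have e1 : (-(2 * μ n)) * (t:ℂ) * Complex.I = -(2 * μ n * t) * Complex.I := by ring
      rw [e1]
      ring
    simp only [heq]
    simpa using (hP.add hM).div_const 2
  have hB : Tendsto (fun n => ∫ s in (0:ℝ)..1, Complex.sin (2 * μ n * s) * q' s) atTop (𝓝 0) := by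
    have heq : ∀ n, (∫ s in (0:ℝ)..1, Complex.sin (2 * μ n * s) * q' s)
        = ((∫ t in (0:ℝ)..1, Complex.exp (-(2 * μ n) * t * Complex.I) * q' t)
          - ∫ t in (0:ℝ)..1, Complex.exp (2 * μ n * t * Complex.I) * q' t) * Complex.I / 2 := by
      intro n
      rw [← intervalIntegral.integral_sub (hintc _) (hintc _), ← intervalIntegral.integral_mul_const,
        ← intervalIntegral.integral_div]
      apply intervalIntegral.integral_congr
      intro t _
      dsimp only
      rw [hsin_eq]
      have e1 : (-(2 * μ n)) * (t:ℂ) * Complex.I = -(2 * μ n * t) * Complex.I := by ring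
      rw [e1]
      ring
    simp only [heq]
    simpa using ((hM.sub hP).mul_const Complex.I).div_const 2
  -- n / (2 μ n) → (4π)⁻¹
  have hinv : Tendsto (fun n : ℕ => ((n : ℂ))⁻¹) atTop (𝓝 0) := by
    have h1 : Tendsto (fun n : ℕ => ((n : ℝ))⁻¹) atTop (𝓝 0) :=
      tendsto_inv_atTop_nhds_zero_nat
    have := (Complex.continuous_ofReal.tendsto 0).comp h1
    simpa [Function.comp_def] using this
  have hratio : Tendsto (fun n : ℕ => (2 * μ n) / (n : ℂ)) atTop (𝓝 (4 * π)) := by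
    have h1 : Tendsto (fun n : ℕ => (4 * π : ℂ) + 2 * δ n * ((n : ℂ))⁻¹) atTop (𝓝 (4 * π)) := by
      have h2 : Tendsto (fun n : ℕ => 2 * δ n * ((n : ℂ))⁻¹) atTop (𝓝 0) := by
        simpa using (hδ.const_mul 2).mul hinv
      simpa using tendsto_const_nhds.add h2
    apply h1.congr'
    filter_upwards [eventually_ge_atTop 1] with n hn
    have hn0 : (n : ℂ) ≠ 0 := Nat.cast_ne_zero.2 (by omega)
    simp only [hδdef]
    field_simp
    ring
  have h4π : (4 * (π:ℂ)) ≠ 0 :=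
    mul_ne_zero (by norm_num) (Complex.ofReal_ne_zero.2 Real.pi_ne_zero)
  have hnz : Tendsto (fun n : ℕ => (n : ℂ) / (2 * μ n)) atTop (𝓝 ((4 * π : ℂ))⁻¹) := by
    have := hratio.inv₀ h4π
    simpa only [inv_div] using this
  -- eventual nonvanishing
  have hμne : ∀ᶠ n in atTop, (2 * μ n : ℂ) ≠ 0 := by
    filter_upwards [eventually_ge_atTop 1, eventually_ge_atTop (⌈C⌉₊ + 1)] with n h1 h2
    have hn1 : (1:ℝ) ≤ n := by exact_mod_cast h1
    have hCn : C ≤ (n:ℝ) := by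
      calc C ≤ (⌈C⌉₊ : ℝ) := Nat.le_ceil C
        _ ≤ (n:ℝ) := by exact_mod_cast Nat.le_of_succ_le h2
    have hb : ‖μ n - 2 * π * n‖ ≤ 1 := by
      refine (hμ n h1).trans ?_
      rw [div_le_one (by linarith)]
      exact hCn
    intro hcontra
    have hμ0 : μ n = 0 := by
      have := mul_eq_zero.1 hcontra
      rcases this with h | h
      · norm_num at h
      · exact h
    rw [hμ0] at hb
    have : ‖(0:ℂ) - 2 * π * n‖ = 2 * π * n := by
      rw [zero_sub, norm_neg, show (2*(π:ℂ)*n) = ((2*π*n:ℝ):ℂ) by push_cast; ring,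
        Complex.norm_real, Real.norm_eq_abs, abs_of_pos (by positivity)]
    rw [this] at hb
    nlinarith [Real.pi_gt_three]
  -- assemble claim 1
  constructor
  · have htop : Tendsto (fun n => q 1 - q 1 * Complex.cos (2 * μ n)
        + ∫ s in (0:ℝ)..1, Complex.cos (2 * μ n * s) * q' s) atTop (𝓝 0) := by
      have h1 : Tendsto (fun n => q 1 - q 1 * Complex.cos (2 * μ n)) atTop (𝓝 (q 1 - q 1 * 1)) :=
        tendsto_const_nhds.sub (tendsto_const_nhds.mul hcosz)
      have := h1.add hA
      simpa using this
    have key1 : Tendsto (fun n : ℕ => (n:ℂ) * ((q 1 - q 1 * Complex.cos (2 * μ n)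
        + ∫ s in (0:ℝ)..1, Complex.cos (2 * μ n * s) * q' s) / (2 * μ n))) atTop (𝓝 0) := by
      have := hnz.mul htop
      rw [mul_zero] at this
      apply this.congr
      intro n
      ring
    refine (littleo_helper _ key1).congr' ?_ EventuallyEq.rfl
    filter_upwards [hμne] with n hz
    show _ = _
    rw [id_sin q q' hq' hq _ hz]
    field_simp
    ring
  · have htop : Tendsto (fun n => Complex.sin (2 * μ n) * q 1
        - ∫ s in (0:ℝ)..1, Complex.sin (2 * μ n * s) * q' s) atTop (𝓝 0) := by
      have := (hsinz.mul_const (q 1)).sub hB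
      simpa using this
    have key2 : Tendsto (fun n : ℕ => (n:ℂ) * ((Complex.sin (2 * μ n) * q 1
        - ∫ s in (0:ℝ)..1, Complex.sin (2 * μ n * s) * q' s) / (2 * μ n))) atTop (𝓝 0) := by
      have := hnz.mul htop
      rw [mul_zero] at this
      apply this.congr
      intro n
      ring
    refine (littleo_helper _ key2).congr' ?_ EventuallyEq.rfl
    filter_upwards [hμne] with n hz
    show _ = _
    rw [id_cos q q' hq' hq _ hz]
end

section
/- Let β₃ ≠ −1 and β₄ ∈ ℂ, β₄ ≠ 0. The zeros of the function h(μ) = iμ(1 + β₃)(e^{iμ} + 1) + β₄(e^{iμ} − 1) near the points (2n+1)π satisfy, for large n: there is exactly one zero μ_n in a disk of radius C/n about (2n+1)π, and μ_n = (2n+1)π + (2β₄/(β₃+1))·1/((2n+1)π) + O(1/n²). -/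
open Complex Real

section aux
-- log is 2-Lipschitz on closed ball of radius 1/2 around 1
lemma log_lip {w w' : ℂ} (hw : ‖w - 1‖ ≤ 1/2) (hw' : ‖w' - 1‖ ≤ 1/2) :
    ‖Complex.log w - Complex.log w'‖ ≤ 2 * ‖w - w'‖ := by
  set s : Set ℂ := Metric.closedBall (1:ℂ) (1/2) with hs
  have hmem : ∀ x : ℂ, ‖x - 1‖ ≤ 1/2 → x ∈ s := by
    intro x hx; simpa [s, Metric.mem_closedBall, Complex.dist_eq] using hx
  have hre : ∀ x ∈ s, (1:ℝ)/2 ≤ x.re := by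
    intro x hx
    have h1 : |(x - 1).re| ≤ ‖x - 1‖ := Complex.abs_re_le_norm _
    have h2 : ‖x - 1‖ ≤ 1/2 := by simpa [s, Metric.mem_closedBall, Complex.dist_eq] using hx
    have : |x.re - 1| ≤ 1/2 := by simpa using h1.trans h2
    have := abs_le.mp this
    linarith [this.1]
  have hderiv : ∀ x ∈ s, HasDerivWithinAt Complex.log x⁻¹ s x := by
    intro x hx
    refine (Complex.hasDerivAt_log ?_).hasDerivWithinAt
    exact Complex.mem_slitPlane_iff.mpr (Or.inl (by linarith [hre x hx]))
  have hbound : ∀ x ∈ s, ‖(x : ℂ)⁻¹‖ ≤ 2 := by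
    intro x hx
    have h2 : ‖x - 1‖ ≤ 1/2 := by simpa [s, Metric.mem_closedBall, Complex.dist_eq] using hx
    have hx1 : (1:ℝ)/2 ≤ ‖x‖ := by
      have h3 : ‖(1:ℂ)‖ - ‖x‖ ≤ ‖(1:ℂ) - x‖ := norm_sub_norm_le 1 x
      rw [norm_sub_rev] at h3
      simp only [norm_one] at h3
      linarith
    rw [norm_inv]
    rw [inv_le_comm₀ (by linarith) (by norm_num)]
    linarith
  have := (convex_closedBall (1:ℂ) (1/2)).norm_image_sub_le_of_norm_hasDerivWithin_le
    hderiv hbound (hmem w' hw') (hmem w hw)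
  simpa [norm_sub_rev] using this

lemma log_bound {w : ℂ} (hw : ‖w - 1‖ ≤ 1/2) : ‖Complex.log w‖ ≤ 2 * ‖w - 1‖ := by
  have := log_lip hw (by norm_num : ‖(1:ℂ) - 1‖ ≤ 1/2)
  simpa [Complex.log_one] using this

lemma exp_pc (n : ℕ) : Complex.exp (I * ((2 * (n:ℂ) + 1) * (π:ℂ))) = -1 := by
  have h1 : I * ((2 * (n:ℂ) + 1) * (π:ℂ)) = ((2*n+1 : ℕ) : ℂ) * ((π:ℂ) * I) := by
    push_cast; ring
  rw [h1, Complex.exp_nat_mul, Complex.exp_pi_mul_I]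
  exact Odd.neg_one_pow ⟨n, by ring⟩

-- generic contraction on a closed ball around 0
lemma exists_fixed (F : ℂ → ℂ) (r : ℝ) (hr : 0 < r)
    (hmaps : ∀ δ : ℂ, ‖δ‖ ≤ r → ‖F δ‖ ≤ r)
    (hlip : ∀ x y : ℂ, ‖x‖ ≤ r → ‖y‖ ≤ r → ‖F x - F y‖ ≤ (1/2) * ‖x - y‖) :
    ∃ δ : ℂ, ‖δ‖ ≤ r ∧ F δ = δ := by
  set s : Set ℂ := Metric.closedBall (0:ℂ) r with hs
  have hcl : IsClosed s := Metric.isClosed_closedBall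
  haveI : CompleteSpace s := hcl.completeSpace_coe
  haveI : Nonempty s := ⟨⟨0, Metric.mem_closedBall_self hr.le⟩⟩
  have hmem : ∀ x : s, ‖(x:ℂ)‖ ≤ r := fun x => mem_closedBall_zero_iff.mp x.2
  set F' : s → s := fun x => ⟨F x, mem_closedBall_zero_iff.mpr (hmaps x (hmem x))⟩ with hF'
  have hcontr : ContractingWith (1/2 : NNReal) F' := by
    constructor
    · have h12 : ((1/2 : NNReal) : ℝ) < ((1:NNReal):ℝ) := by norm_num
      exact_mod_cast h12
    · apply LipschitzWith.of_dist_le_mul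
      intro x y
      have : dist (F' x) (F' y) = ‖F (x:ℂ) - F (y:ℂ)‖ := by
        rw [Subtype.dist_eq]; simp [hF', dist_eq_norm]
      rw [this]
      have h2 : dist x y = ‖(x:ℂ) - (y:ℂ)‖ := by rw [Subtype.dist_eq]; simp [dist_eq_norm]
      rw [h2]
      have := hlip x y (hmem x) (hmem y)
      calc ‖F (x:ℂ) - F (y:ℂ)‖ ≤ (1/2) * ‖(x:ℂ) - (y:ℂ)‖ := this
        _ = ((1/2 : NNReal) : ℝ) * ‖(x:ℂ) - (y:ℂ)‖ := by norm_num
  obtain hfix := hcontr.fixedPoint_isFixedPt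
  refine ⟨(ContractingWith.fixedPoint F' hcontr : s), hmem _, ?_⟩
  have := congrArg Subtype.val hfix
  simpa [hF'] using this

end aux

open Complex Real

noncomputable section est

def Af (b β₄ pc δ : ℂ) : ℂ := I*b*(pc+δ) + β₄
def gf (b β₄ pc δ : ℂ) : ℂ := (I*b*(pc+δ) - β₄) / Af b β₄ pc δ
def Ff (b β₄ pc δ : ℂ) : ℂ := -I * Complex.log (gf b β₄ pc δ)

variable {b β₄ pc : ℂ} {p : ℝ}

lemma Alow (hpc : ‖pc‖ = p) (hp1 : 1 ≤ p) (hden : ‖b‖ + ‖β₄‖ ≤ ‖b‖*p/2)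
    {δ : ℂ} (hδ : ‖δ‖ ≤ 1) : ‖b‖*p/2 ≤ ‖Af b β₄ pc δ‖ := by
  have h1 : ‖I*b*(pc+δ)‖ = ‖b‖ * ‖pc+δ‖ := by
    rw [mul_assoc, norm_mul, norm_mul, Complex.norm_I, one_mul]
  have h2 : p - 1 ≤ ‖pc+δ‖ := by
    have h0 : ‖pc‖ ≤ ‖pc + δ‖ + ‖δ‖ := by
      calc ‖pc‖ = ‖(pc + δ) - δ‖ := by congr 1; ring
        _ ≤ ‖pc + δ‖ + ‖δ‖ := norm_sub_le _ _
    rw [hpc] at h0; linarith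
  have h3 : ‖I*b*(pc+δ)‖ - ‖β₄‖ ≤ ‖Af b β₄ pc δ‖ := by
    have h0 : ‖I*b*(pc+δ)‖ ≤ ‖Af b β₄ pc δ‖ + ‖β₄‖ := by
      calc ‖I*b*(pc+δ)‖ = ‖(I*b*(pc+δ) + β₄) - β₄‖ := by congr 1; ring
        _ ≤ ‖I*b*(pc+δ) + β₄‖ + ‖β₄‖ := norm_sub_le _ _
        _ = ‖Af b β₄ pc δ‖ + ‖β₄‖ := rfl
    linarith
  have h5 : ‖b‖ * (p-1) ≤ ‖b‖ * ‖pc+δ‖ := by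
    apply mul_le_mul_of_nonneg_left h2 (norm_nonneg b)
  nlinarith [norm_nonneg b]

lemma Ane (hpc : ‖pc‖ = p) (hp1 : 1 ≤ p) (hden : ‖b‖ + ‖β₄‖ ≤ ‖b‖*p/2)
    (hb : b ≠ 0) {δ : ℂ} (hδ : ‖δ‖ ≤ 1) : Af b β₄ pc δ ≠ 0 := by
  have hB : 0 < ‖b‖ := norm_pos_iff.mpr hb
  have := Alow hpc hp1 hden hδ
  have : 0 < ‖Af b β₄ pc δ‖ := by nlinarith
  exact norm_pos_iff.mp this

lemma g_sub_one (hpc : ‖pc‖ = p) (hp1 : 1 ≤ p) (hden : ‖b‖ + ‖β₄‖ ≤ ‖b‖*p/2)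
    (hb : b ≠ 0) {δ : ℂ} (hδ : ‖δ‖ ≤ 1) :
    gf b β₄ pc δ - 1 = -2*β₄ / Af b β₄ pc δ ∧
    ‖gf b β₄ pc δ - 1‖ ≤ 4*‖β₄‖/(‖b‖*p) := by
  have hB : 0 < ‖b‖ := norm_pos_iff.mpr hb
  have hane := Ane hpc hp1 hden hb hδ
  have hlow := Alow hpc hp1 hden hδ
  have hid : gf b β₄ pc δ - 1 = -2*β₄ / Af b β₄ pc δ := by
    unfold gf
    rw [div_sub_one hane]
    unfold Af
    ring_nf
  refine ⟨hid, ?_⟩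
  rw [hid]
  have hnorm : ‖-2*β₄ / Af b β₄ pc δ‖ = 2*‖β₄‖/‖Af b β₄ pc δ‖ := by
    rw [norm_div, norm_mul]
    norm_num
  rw [hnorm]
  have hpos : 0 < ‖b‖*p/2 := by positivity
  calc 2*‖β₄‖/‖Af b β₄ pc δ‖ ≤ 2*‖β₄‖/(‖b‖*p/2) := by
        apply div_le_div_of_nonneg_left (by positivity) hpos hlow
    _ = 4*‖β₄‖/(‖b‖*p) := by
        have hBne : ‖b‖ ≠ 0 := hB.ne'
        have hpne : p ≠ 0 := by linarith
        have habs : ‖b‖ ≠ 0 := by simpa using hBne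
        field_simp
        ring

lemma g_lip (hpc : ‖pc‖ = p) (hp1 : 1 ≤ p) (hden : ‖b‖ + ‖β₄‖ ≤ ‖b‖*p/2)
    (hb : b ≠ 0) {δ δ' : ℂ} (hδ : ‖δ‖ ≤ 1) (hδ' : ‖δ'‖ ≤ 1) :
    ‖gf b β₄ pc δ - gf b β₄ pc δ'‖ ≤ (8*‖β₄‖/(‖b‖*p^2)) * ‖δ - δ'‖ := by
  have hB : 0 < ‖b‖ := norm_pos_iff.mpr hb
  have hane := Ane hpc hp1 hden hb hδ
  have hane' := Ane hpc hp1 hden hb hδ'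
  have hlow := Alow hpc hp1 hden hδ
  have hlow' := Alow hpc hp1 hden hδ'
  have hid : gf b β₄ pc δ - gf b β₄ pc δ' =
      2*β₄*(I*b*(δ - δ'))/(Af b β₄ pc δ * Af b β₄ pc δ') := by
    unfold gf
    rw [div_sub_div _ _ hane hane']
    unfold Af
    ring_nf
  rw [hid]
  have hnum : ‖2*β₄*(I*b*(δ - δ'))‖ = 2*‖β₄‖*(‖b‖*‖δ-δ'‖) := by
    simp [norm_mul]
  rw [norm_div, hnum, norm_mul]
  have hpos : 0 < ‖b‖*p/2 := by positivity
  calc 2*‖β₄‖*(‖b‖*‖δ-δ'‖)/(‖Af b β₄ pc δ‖ * ‖Af b β₄ pc δ'‖)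
      ≤ 2*‖β₄‖*(‖b‖*‖δ-δ'‖)/((‖b‖*p/2) * (‖b‖*p/2)) := by
        apply div_le_div_of_nonneg_left (by positivity) (by positivity)
        exact mul_le_mul hlow hlow' hpos.le (norm_nonneg _)
    _ = (8*‖β₄‖/(‖b‖*p^2)) * ‖δ - δ'‖ := by
        have hBne : ‖b‖ ≠ 0 := hB.ne'
        have hpne : p ≠ 0 := by linarith
        have habs : ‖b‖ ≠ 0 := by simpa using hBne
        field_simp
        ring

lemma F_lip (hpc : ‖pc‖ = p) (hp1 : 1 ≤ p) (hden : ‖b‖ + ‖β₄‖ ≤ ‖b‖*p/2)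
    (hb : b ≠ 0) (hg : 4*‖β₄‖/(‖b‖*p) ≤ 1/2)
    {δ δ' : ℂ} (hδ : ‖δ‖ ≤ 1) (hδ' : ‖δ'‖ ≤ 1) :
    ‖Ff b β₄ pc δ - Ff b β₄ pc δ'‖ ≤ (16*‖β₄‖/(‖b‖*p^2)) * ‖δ - δ'‖ := by
  have hg1 := (g_sub_one hpc hp1 hden hb hδ).2
  have hg1' := (g_sub_one hpc hp1 hden hb hδ').2
  have h1 : ‖gf b β₄ pc δ - 1‖ ≤ 1/2 := hg1.trans hg
  have h1' : ‖gf b β₄ pc δ' - 1‖ ≤ 1/2 := hg1'.trans hg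
  have hFdiff : Ff b β₄ pc δ - Ff b β₄ pc δ' =
      -I * (Complex.log (gf b β₄ pc δ) - Complex.log (gf b β₄ pc δ')) := by
    unfold Ff; ring
  rw [hFdiff, norm_mul]
  have : ‖-I‖ = 1 := by simp
  rw [this, one_mul]
  calc ‖Complex.log (gf b β₄ pc δ) - Complex.log (gf b β₄ pc δ')‖
      ≤ 2 * ‖gf b β₄ pc δ - gf b β₄ pc δ'‖ := log_lip h1 h1'
    _ ≤ 2 * ((8*‖β₄‖/(‖b‖*p^2)) * ‖δ - δ'‖) := by
        have := g_lip hpc hp1 hden hb hδ hδ'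
        linarith
    _ = (16*‖β₄‖/(‖b‖*p^2)) * ‖δ - δ'‖ := by ring

lemma F0_bound (hpc : ‖pc‖ = p) (hp1 : 1 ≤ p) (hden : ‖b‖ + ‖β₄‖ ≤ ‖b‖*p/2)
    (hb : b ≠ 0) (hg : 4*‖β₄‖/(‖b‖*p) ≤ 1/2) :
    ‖Ff b β₄ pc 0‖ ≤ 8*‖β₄‖/(‖b‖*p) := by
  have hg1 := (g_sub_one hpc hp1 hden hb (by norm_num : ‖(0:ℂ)‖ ≤ 1)).2
  have h1 : ‖gf b β₄ pc 0 - 1‖ ≤ 1/2 := hg1.trans hg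
  have : ‖Ff b β₄ pc 0‖ = ‖Complex.log (gf b β₄ pc 0)‖ := by
    unfold Ff; rw [norm_mul]; simp
  rw [this]
  calc ‖Complex.log (gf b β₄ pc 0)‖ ≤ 2 * ‖gf b β₄ pc 0 - 1‖ := log_bound h1
    _ ≤ 2 * (4*‖β₄‖/(‖b‖*p)) := by linarith
    _ = 8*‖β₄‖/(‖b‖*p) := by ring

end est
lemma w1_identity (b β₄ pc A : ℂ) (hA : A = I*b*(pc+0) + β₄) (hb : b ≠ 0) (hpc : pc ≠ 0)
    (hAne : A ≠ 0) :
    (-I * (-2*β₄/A)) - (2*β₄/b)*(1/pc) = (-2*β₄^2)/(A*(b*pc)) := by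
  subst hA
  rw [add_zero] at hAne ⊢
  have h2 : b * pc ≠ 0 := mul_ne_zero hb hpc
  field_simp [hAne]
  ring

set_option maxHeartbeats 1000000 in
lemma key (β₃ β₄ : ℂ) (hb : (1:ℂ) + β₃ ≠ 0) (hβ₄ : β₄ ≠ 0) :
    ∃ (C K : ℝ) (N : ℕ), 0 < C ∧ 0 < K ∧ ∀ n : ℕ, N ≤ n →
      ∃ z : ℂ,
        (I * z * (1 + β₃) * (Complex.exp (I*z) + 1) + β₄ * (Complex.exp (I*z) - 1) = 0) ∧
        ‖z - (2*(n:ℂ)+1)*(π:ℂ)‖ ≤ C / n ∧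
        (∀ w : ℂ, I * w * (1 + β₃) * (Complex.exp (I*w) + 1) + β₄ * (Complex.exp (I*w) - 1) = 0 →
          ‖w - (2*(n:ℂ)+1)*(π:ℂ)‖ ≤ C / n → w = z) ∧
        ‖z - (2*(n:ℂ)+1)*(π:ℂ) - (2*β₄/(β₃+1)) * (1/((2*(n:ℂ)+1)*(π:ℂ)))‖ ≤ K / (n:ℝ)^2 := by
  set b : ℂ := 1 + β₃ with hbdef
  have hB : 0 < ‖b‖ := norm_pos_iff.mpr hb
  have hb4 : 0 < ‖β₄‖ := norm_pos_iff.mpr hβ₄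
  have habs : ‖b‖ ≠ 0 := by simpa using hB.ne'
  have hb4abs : ‖β₄‖ ≠ 0 := by simpa using hb4.ne'
  set C : ℝ := 4*‖β₄‖/‖b‖ with hCdef
  have hCpos : 0 < C := by positivity
  set K : ℝ := 16*‖β₄‖*C/‖b‖ + 16*‖β₄‖^2/‖b‖^2 + 4*‖β₄‖^2/‖b‖^2 with hKdef
  have hKpos : 0 < K := by positivity
  set M : ℝ := 1 + C + 2*(‖b‖+‖β₄‖)/‖b‖ + 8*‖β₄‖/‖b‖ + 32*‖β₄‖/‖b‖ with hMdef
  refine ⟨C, K, ⌈M⌉₊ + 1, hCpos, hKpos, ?_⟩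
  intro n hn
  have hnM : M ≤ (n:ℝ) := by
    have h1 : (⌈M⌉₊ : ℝ) ≤ (n:ℝ) := by
      have : ⌈M⌉₊ ≤ n := le_trans (Nat.le_succ _) hn
      exact_mod_cast this
    exact (Nat.le_ceil M).trans h1
  have hMges : 0 ≤ C ∧ 0 ≤ 2*(‖b‖+‖β₄‖)/‖b‖ ∧ 0 ≤ 8*‖β₄‖/‖b‖ ∧ 0 ≤ 32*‖β₄‖/‖b‖ :=
    ⟨by positivity, by positivity, by positivity, by positivity⟩
  obtain ⟨hM1, hM2, hM3, hM4⟩ := hMges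
  have hn1 : (1:ℝ) ≤ (n:ℝ) := by rw [hMdef] at hnM; linarith
  have hn0 : (0:ℝ) < (n:ℝ) := by linarith
  set p : ℝ := (2*(n:ℝ)+1)*π with hpdef
  have hπ3 : (3:ℝ) < π := Real.pi_gt_three
  have hp6 : 6*(n:ℝ) ≤ p := by rw [hpdef]; nlinarith
  have hpn : (n:ℝ) ≤ p := by linarith
  have hp1 : (1:ℝ) ≤ p := hn1.trans hpn
  have hppos : (0:ℝ) < p := by linarith
  have hpne : p ≠ 0 := hppos.ne'
  have hnne : (n:ℝ) ≠ 0 := hn0.ne'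
  set pc : ℂ := (2*(n:ℂ)+1)*(π:ℂ) with hpcdef
  have hpcval : pc = ((p:ℝ):ℂ) := by rw [hpcdef, hpdef]; push_cast; ring
  have hpcnorm : ‖pc‖ = p := by
    rw [hpcval, Complex.norm_real, Real.norm_eq_abs, abs_of_pos hppos]
  have hpcne : pc ≠ 0 := by
    intro h0; rw [h0] at hpcnorm; simp at hpcnorm; linarith
  -- size conditions
  have hden : ‖b‖ + ‖β₄‖ ≤ ‖b‖*p/2 := by
    have h1 : 2*(‖b‖+‖β₄‖)/‖b‖ ≤ p := by rw [hMdef] at hnM; linarith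
    have h2 := mul_le_mul_of_nonneg_left h1 hB.le
    have h3 : ‖b‖ * (2*(‖b‖+‖β₄‖)/‖b‖) = 2*(‖b‖+‖β₄‖) := by field_simp
    rw [h3] at h2; linarith
  have hg : 4*‖β₄‖/(‖b‖*p) ≤ 1/2 := by
    have h1 : 8*‖β₄‖/‖b‖ ≤ p := by rw [hMdef] at hnM; linarith
    have h2 := mul_le_mul_of_nonneg_left h1 hB.le
    have h3 : ‖b‖ * (8*‖β₄‖/‖b‖) = 8*‖β₄‖ := by field_simp
    rw [h3] at h2
    rw [div_le_iff₀ (by positivity)]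
    linarith
  have hL : 16*‖β₄‖/(‖b‖*p^2) ≤ 1/2 := by
    have h1 : 32*‖β₄‖/‖b‖ ≤ p := by rw [hMdef] at hnM; linarith
    have h2 := mul_le_mul_of_nonneg_left h1 hB.le
    have h3 : ‖b‖ * (32*‖β₄‖/‖b‖) = 32*‖β₄‖ := by field_simp
    rw [h3] at h2
    have hpsq : p ≤ p^2 := by nlinarith
    have h4 : ‖b‖*p ≤ ‖b‖*p^2 := mul_le_mul_of_nonneg_left hpsq hB.le
    rw [div_le_iff₀ (by positivity)]
    linarith
  -- the radius
  set r : ℝ := C/(n:ℝ) with hrdef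
  have hrpos : 0 < r := by positivity
  have hr1 : r ≤ 1 := by
    rw [hrdef, div_le_one hn0]
    rw [hMdef] at hnM; linarith
  -- contraction data
  have hlip2 : ∀ x y : ℂ, ‖x‖ ≤ r → ‖y‖ ≤ r →
      ‖Ff b β₄ pc x - Ff b β₄ pc y‖ ≤ (1/2) * ‖x - y‖ := by
    intro x y hx hy
    have := F_lip hpcnorm hp1 hden hb hg (hx.trans hr1) (hy.trans hr1)
    calc ‖Ff b β₄ pc x - Ff b β₄ pc y‖ ≤ (16*‖β₄‖/(‖b‖*p^2)) * ‖x - y‖ := this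
      _ ≤ (1/2) * ‖x - y‖ := mul_le_mul_of_nonneg_right hL (norm_nonneg _)
  have hmaps : ∀ δ : ℂ, ‖δ‖ ≤ r → ‖Ff b β₄ pc δ‖ ≤ r := by
    intro δ hδ
    have h0 := F0_bound hpcnorm hp1 hden hb hg
    have hlipd := hlip2 δ 0 hδ (by simp [hrpos.le])
    rw [sub_zero] at hlipd
    have htr : ‖Ff b β₄ pc δ‖ ≤ ‖Ff b β₄ pc 0‖ + ‖Ff b β₄ pc δ - Ff b β₄ pc 0‖ := by
      calc ‖Ff b β₄ pc δ‖ = ‖Ff b β₄ pc 0 + (Ff b β₄ pc δ - Ff b β₄ pc 0)‖ := by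
            congr 1; ring
        _ ≤ _ := norm_add_le _ _
    have hhalf : 8*‖β₄‖/(‖b‖*p) ≤ r/2 := by
      have h4 : ‖b‖*(4*(n:ℝ)) ≤ ‖b‖*p := by
        apply mul_le_mul_of_nonneg_left _ hB.le; linarith
      have h5 : 8*‖β₄‖/(‖b‖*p) ≤ 8*‖β₄‖/(‖b‖*(4*(n:ℝ))) :=
        div_le_div_of_nonneg_left (by positivity) (by positivity) h4
      have h6 : 8*‖β₄‖/(‖b‖*(4*(n:ℝ))) = r/2 := by
        rw [hrdef, hCdef]; field_simp; ring
      linarith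
    linarith
  obtain ⟨δ0, hδ0r, hfix⟩ := exists_fixed (Ff b β₄ pc) r hrpos hmaps hlip2
  have hδ01 : ‖δ0‖ ≤ 1 := hδ0r.trans hr1
  -- g bounded away from 0
  have hgnorm : ∀ δ : ℂ, ‖δ‖ ≤ 1 → ‖gf b β₄ pc δ - 1‖ ≤ 1/2 := fun δ hδ =>
    ((g_sub_one hpcnorm hp1 hden hb hδ).2).trans hg
  have hgne : ∀ δ : ℂ, ‖δ‖ ≤ 1 → gf b β₄ pc δ ≠ 0 := by
    intro δ hδ
    have h1 := hgnorm δ hδ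
    have h2 : ‖(1:ℂ)‖ ≤ ‖gf b β₄ pc δ‖ + ‖gf b β₄ pc δ - 1‖ := by
      calc ‖(1:ℂ)‖ = ‖gf b β₄ pc δ - (gf b β₄ pc δ - 1)‖ := by congr 1; ring
        _ ≤ _ := norm_sub_le _ _
    simp only [norm_one] at h2
    intro h0
    rw [h0] at h1 h2
    simp at h1 h2
    linarith
  -- the equation equivalence
  have hepc : Complex.exp (I * pc) = -1 := by rw [hpcdef]; exact exp_pc n
  have hiff : ∀ δ : ℂ,
      ((I * (pc+δ) * b * (Complex.exp (I*(pc+δ)) + 1) + β₄ * (Complex.exp (I*(pc+δ)) - 1) = 0) ↔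
       Complex.exp (I*δ) * Af b β₄ pc δ = I*b*(pc+δ) - β₄) := by
    intro δ
    have he : Complex.exp (I*(pc+δ)) = -Complex.exp (I*δ) := by
      rw [mul_add, Complex.exp_add, hepc]; ring
    rw [he]
    unfold Af
    constructor
    · intro h0; linear_combination -h0
    · intro h0; linear_combination -h0
  -- z := pc + δ0 is a zero
  have hIF : ∀ δ : ℂ, I * Ff b β₄ pc δ = Complex.log (gf b β₄ pc δ) := by
    intro δ
    unfold Ff
    linear_combination (-(Complex.log (gf b β₄ pc δ))) * Complex.I_sq
  have hgz : Complex.exp (I*δ0) = gf b β₄ pc δ0 := by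
    calc Complex.exp (I*δ0) = Complex.exp (I * Ff b β₄ pc δ0) := by rw [hfix]
      _ = Complex.exp (Complex.log (gf b β₄ pc δ0)) := by rw [hIF]
      _ = gf b β₄ pc δ0 := Complex.exp_log (hgne δ0 hδ01)
  have hane0 : ∀ δ : ℂ, ‖δ‖ ≤ 1 → Af b β₄ pc δ ≠ 0 := fun δ hδ => Ane hpcnorm hp1 hden hb hδ
  have hzero : I * (pc+δ0) * b * (Complex.exp (I*(pc+δ0)) + 1)
      + β₄ * (Complex.exp (I*(pc+δ0)) - 1) = 0 := by
    apply (hiff δ0).mpr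
    rw [hgz]
    unfold gf
    exact div_mul_cancel₀ _ (hane0 δ0 hδ01)
  refine ⟨pc + δ0, ?_, ?_, ?_, ?_⟩
  · exact hzero
  · simpa using hδ0r
  · -- uniqueness
    intro w hw hwnear
    have hδw : ‖w - pc‖ ≤ r := hwnear
    have hδw1 : ‖w - pc‖ ≤ 1 := hδw.trans hr1
    have hw' : I * (pc+(w-pc)) * b * (Complex.exp (I*(pc+(w-pc))) + 1)
        + β₄ * (Complex.exp (I*(pc+(w-pc))) - 1) = 0 := by
      rw [show pc + (w-pc) = w by ring]; exact hw
    have heq := (hiff (w-pc)).mp hw'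
    have hgw : Complex.exp (I*(w-pc)) = gf b β₄ pc (w-pc) := by
      unfold gf
      rw [eq_div_iff (hane0 _ hδw1)]
      exact heq
    have hgw2 : Complex.exp (I*(w-pc)) = Complex.exp (Complex.log (gf b β₄ pc (w-pc))) := by
      rw [Complex.exp_log (hgne _ hδw1)]; exact hgw
    obtain ⟨k, hk⟩ := Complex.exp_eq_exp_iff_exists_int.mp hgw2
    have hlogb : ‖Complex.log (gf b β₄ pc (w-pc))‖ ≤ 1 := by
      have := log_bound (hgnorm _ hδw1)
      have h2 := hgnorm _ hδw1
      linarith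
    have hknorm : |(k:ℝ)| * (2*π) ≤ 2 := by
      have h1 : ‖(k:ℂ) * (2*(π:ℂ)*I)‖ = |(k:ℝ)| * (2*π) := by
        rw [norm_mul]
        congr 1
        · exact_mod_cast Complex.norm_intCast k
        · rw [norm_mul, Complex.norm_I, mul_one, norm_mul]
          simp [Real.pi_nonneg]
      have h2 : (k:ℂ) * (2*(π:ℂ)*I) = I*(w-pc) - Complex.log (gf b β₄ pc (w-pc)) := by
        linear_combination -hk
      have h3 : ‖I*(w-pc) - Complex.log (gf b β₄ pc (w-pc))‖ ≤ 2 := by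
        have h4 : ‖I*(w-pc)‖ ≤ 1 := by
          rw [norm_mul, Complex.norm_I, one_mul]; exact hδw1
        calc ‖I*(w-pc) - Complex.log (gf b β₄ pc (w-pc))‖
            ≤ ‖I*(w-pc)‖ + ‖Complex.log (gf b β₄ pc (w-pc))‖ := norm_sub_le _ _
          _ ≤ 2 := by linarith
      rw [← h1, h2]; exact h3
    have hk0 : k = 0 := by
      by_contra hkne
      have h1 : (1:ℝ) ≤ |(k:ℝ)| := by
        have := Int.one_le_abs hkne
        exact_mod_cast this
      nlinarith [hπ3]
    rw [hk0] at hk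
    simp at hk
    have hwfix : Ff b β₄ pc (w-pc) = w - pc := by
      unfold Ff
      rw [← hk]
      linear_combination (-(w - pc)) * Complex.I_sq
    have hdiff : ‖(w-pc) - δ0‖ ≤ (1/2) * ‖(w-pc) - δ0‖ := by
      calc ‖(w-pc) - δ0‖ = ‖Ff b β₄ pc (w-pc) - Ff b β₄ pc δ0‖ := by rw [hwfix, hfix]
        _ ≤ (1/2) * ‖(w-pc) - δ0‖ := hlip2 _ _ hδw hδ0r
    have : ‖(w-pc) - δ0‖ = 0 := by linarith [norm_nonneg ((w-pc) - δ0)]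
    have := norm_eq_zero.mp this
    have : w - pc = δ0 := sub_eq_zero.mp this
    linear_combination this
  · -- asymptotics
    have hβ31 : β₃ + 1 = b := by rw [hbdef]; ring
    rw [hβ31]
    have hsimp : pc + δ0 - pc - (2*β₄/b) * (1/pc) = δ0 - (2*β₄/b) * (1/pc) := by ring
    rw [hsimp]
    set w0 : ℂ := -2*β₄ / Af b β₄ pc 0 with hw0def
    have hg0 : gf b β₄ pc 0 = 1 + w0 := by
      have := (g_sub_one hpcnorm hp1 hden hb (by norm_num : ‖(0:ℂ)‖ ≤ 1)).1
      rw [hw0def]; linear_combination this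
    have hw0norm : ‖w0‖ ≤ 4*‖β₄‖/(‖b‖*p) := by
      have := (g_sub_one hpcnorm hp1 hden hb (by norm_num : ‖(0:ℂ)‖ ≤ 1)).2
      rw [hg0] at this
      simpa using this
    have hw0half : ‖w0‖ ≤ 1/2 := hw0norm.trans hg
    -- decomposition
    have hdec : δ0 - (2*β₄/b) * (1/pc) =
        (Ff b β₄ pc δ0 - Ff b β₄ pc 0) + (Ff b β₄ pc 0 - (-I * w0))
        + ((-I * w0) - (2*β₄/b) * (1/pc)) := by
      rw [hfix]; ring
    rw [hdec]
    -- term 1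
    have ht1 : ‖Ff b β₄ pc δ0 - Ff b β₄ pc 0‖ ≤ (16*‖β₄‖*C/‖b‖) / (n:ℝ)^2 := by
      have h1 := F_lip hpcnorm hp1 hden hb hg hδ01 (by norm_num : ‖(0:ℂ)‖ ≤ 1)
      rw [sub_zero] at h1
      have h2 : (16*‖β₄‖/(‖b‖*p^2)) * ‖δ0‖ ≤ (16*‖β₄‖/(‖b‖*(n:ℝ)^2)) * C := by
        apply mul_le_mul
        · apply div_le_div_of_nonneg_left (by positivity) (by positivity)
          apply mul_le_mul_of_nonneg_left _ hB.le
          exact pow_le_pow_left₀ (by positivity) hpn 2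
        · calc ‖δ0‖ ≤ r := hδ0r
            _ ≤ C := by rw [hrdef]; rw [div_le_iff₀ hn0]; nlinarith
        · exact norm_nonneg _
        · positivity
      have h3 : (16*‖β₄‖/(‖b‖*(n:ℝ)^2)) * C = (16*‖β₄‖*C/‖b‖) / (n:ℝ)^2 := by
        field_simp
      linarith
    -- term 2
    have ht2 : ‖Ff b β₄ pc 0 - (-I * w0)‖ ≤ (16*‖β₄‖^2/‖b‖^2) / (n:ℝ)^2 := by
      have hid : Ff b β₄ pc 0 - (-I * w0) = -I * (Complex.log (1 + w0) - w0) := by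
        unfold Ff
        rw [hg0]; ring
      rw [hid, norm_mul]
      have hnI : ‖(-I : ℂ)‖ = 1 := by simp
      rw [hnI, one_mul]
      have hlt1 : ‖w0‖ < 1 := lt_of_le_of_lt hw0half (by norm_num)
      have h1 := Complex.norm_log_one_add_sub_self_le hlt1
      have h2 : ‖w0‖^2 * (1 - ‖w0‖)⁻¹ / 2 ≤ ‖w0‖^2 := by
        have h3 : (1 - ‖w0‖)⁻¹ ≤ 2 := by
          rw [inv_le_comm₀ (by linarith) (by norm_num)]
          linarith
        nlinarith [sq_nonneg ‖w0‖]
      have h4 : ‖w0‖^2 ≤ (4*‖β₄‖/(‖b‖*(n:ℝ)))^2 := by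
        apply pow_le_pow_left₀ (norm_nonneg _)
        calc ‖w0‖ ≤ 4*‖β₄‖/(‖b‖*p) := hw0norm
          _ ≤ 4*‖β₄‖/(‖b‖*(n:ℝ)) := by
            apply div_le_div_of_nonneg_left (by positivity) (by positivity)
            apply mul_le_mul_of_nonneg_left hpn hB.le
      have h5 : (4*‖β₄‖/(‖b‖*(n:ℝ)))^2 = (16*‖β₄‖^2/‖b‖^2) / (n:ℝ)^2 := by
        field_simp; ring
      linarith
    -- term 3
    have ht3 : ‖(-I * w0) - (2*β₄/b) * (1/pc)‖ ≤ (4*‖β₄‖^2/‖b‖^2) / (n:ℝ)^2 := by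
      have hane00 : Af b β₄ pc 0 ≠ 0 := hane0 0 (by norm_num)
      have hid : (-I * w0) - (2*β₄/b) * (1/pc) = (-2*β₄^2) / (Af b β₄ pc 0 * (b * pc)) := by
        rw [hw0def]
        exact w1_identity b β₄ pc (Af b β₄ pc 0) (by unfold Af; ring) hb hpcne hane00
      rw [hid, norm_div]
      have hnum : ‖(-2*β₄^2 : ℂ)‖ = 2*‖β₄‖^2 := by
        rw [show (-2*β₄^2 : ℂ) = (-2) * β₄^2 by ring, norm_mul, norm_pow]
        norm_num
      have hdenn : ‖Af b β₄ pc 0 * (b * pc)‖ = ‖Af b β₄ pc 0‖ * (‖b‖ * p) := by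
        rw [norm_mul, norm_mul, hpcnorm]
      rw [hnum, hdenn]
      have hlow0 := Alow hpcnorm hp1 hden (by norm_num : ‖(0:ℂ)‖ ≤ 1)
      have hd : (‖b‖*p/2) * (‖b‖ * p) ≤ ‖Af b β₄ pc 0‖ * (‖b‖ * p) := by
        apply mul_le_mul_of_nonneg_right hlow0 (by positivity)
      calc 2*‖β₄‖^2 / (‖Af b β₄ pc 0‖ * (‖b‖ * p))
          ≤ 2*‖β₄‖^2 / ((‖b‖*p/2) * (‖b‖ * p)) :=
            div_le_div_of_nonneg_left (by positivity) (by positivity) hd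
        _ = 4*‖β₄‖^2/(‖b‖^2 * p^2) := by field_simp; ring
        _ ≤ (4*‖β₄‖^2/‖b‖^2) / (n:ℝ)^2 := by
            rw [div_div]
            apply div_le_div_of_nonneg_left (by positivity) (by positivity)
            apply mul_le_mul_of_nonneg_left _ (by positivity)
            exact pow_le_pow_left₀ (by positivity) hpn 2
    calc ‖(Ff b β₄ pc δ0 - Ff b β₄ pc 0) + (Ff b β₄ pc 0 - (-I * w0))
        + ((-I * w0) - (2*β₄/b) * (1/pc))‖
        ≤ ‖(Ff b β₄ pc δ0 - Ff b β₄ pc 0) + (Ff b β₄ pc 0 - (-I * w0))‖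
          + ‖(-I * w0) - (2*β₄/b) * (1/pc)‖ := norm_add_le _ _
      _ ≤ ‖Ff b β₄ pc δ0 - Ff b β₄ pc 0‖ + ‖Ff b β₄ pc 0 - (-I * w0)‖
          + ‖(-I * w0) - (2*β₄/b) * (1/pc)‖ := by linarith [norm_add_le (Ff b β₄ pc δ0 - Ff b β₄ pc 0) (Ff b β₄ pc 0 - (-I * w0))]
      _ ≤ K / (n:ℝ)^2 := by
          rw [hKdef]
          rw [add_div, add_div]
          linarith

theorem stmt_14 (β₃ β₄ : ℂ) (hβ₃ : β₃ ≠ -1) (hβ₄ : β₄ ≠ 0)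
    (h : ℂ → ℂ)
    (hh : ∀ μ : ℂ, h μ = I * μ * (1 + β₃) * (exp (I * μ) + 1) + β₄ * (exp (I * μ) - 1)) :
    ∃ (C K : ℝ) (N : ℕ) (μ : ℕ → ℂ), 0 < C ∧ 0 < K ∧
      ∀ n : ℕ, N ≤ n →
        h (μ n) = 0 ∧
        ‖μ n - (2 * n + 1) * π‖ ≤ C / n ∧
        (∀ z : ℂ, h z = 0 → ‖z - (2 * n + 1) * π‖ ≤ C / n → z = μ n) ∧
        ‖μ n - (2 * n + 1) * π - (2 * β₄ / (β₃ + 1)) * (1 / ((2 * n + 1) * π))‖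
          ≤ K / (n : ℝ) ^ 2 := by
  have hb : (1:ℂ) + β₃ ≠ 0 := by
    intro h0; apply hβ₃; linear_combination h0
  obtain ⟨C, K, N, hC, hK, hkey⟩ := key β₃ β₄ hb hβ₄
  refine ⟨C, K, N, fun n => if hn : N ≤ n then (hkey n hn).choose else 0, hC, hK, ?_⟩
  intro n hn
  obtain ⟨h1, h2, h3, h4⟩ := (hkey n hn).choose_spec
  simp only [dif_pos hn]
  refine ⟨?_, h2, ?_, h4⟩
  · rw [hh]; exact h1
  · intro w hw hwn
    rw [hh] at hw
    exact h3 w hw hwn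
end

section
/- The characteristic determinant Δ₀⁰(μ) = (1 + e^{iμ})(iμ + β₁iμe^{−iμ} − β₂e^{−iμ}) + (iμ + β₁iμe^{iμ} + β₂e^{iμ})(1 + e^{−iμ}) factors as Δ₀⁰(μ) = (1 + e^{−iμ})[iμ(β₁ + 1)(e^{iμ} + 1) + β₂(e^{iμ} − 1)], and for β₁ ≠ −1, β₂ ≠ 0 its zeros near (2n+1)π (other than (2n+1)π itself) satisfy μ = (2n+1)π + (2β₂/(β₁+1))·1/((2n+1)π) + O(1/n²) as n → ∞. -/
open Complex Real

set_option maxHeartbeats 1000000 in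
theorem stmt_15 (β₁ β₂ : ℂ) (hβ₁ : β₁ ≠ -1) (hβ₂ : β₂ ≠ 0) :
    (∀ μ : ℂ,
      (1 + exp (I * μ)) * (I * μ + β₁ * (I * μ) * exp (-I * μ) - β₂ * exp (-I * μ))
        + (I * μ + β₁ * (I * μ) * exp (I * μ) + β₂ * exp (I * μ)) * (1 + exp (-I * μ))
      = (1 + exp (-I * μ)) *
          (I * μ * (β₁ + 1) * (exp (I * μ) + 1) + β₂ * (exp (I * μ) - 1))) ∧
    ∀ C : ℝ, 0 < C → ∃ (K : ℝ) (N : ℕ), ∀ n : ℕ, N ≤ n → ∀ μ : ℂ,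
      (1 + exp (-I * μ)) *
          (I * μ * (β₁ + 1) * (exp (I * μ) + 1) + β₂ * (exp (I * μ) - 1)) = 0 →
      ‖μ - (2 * n + 1) * π‖ ≤ C / n →
      μ ≠ (2 * n + 1) * π →
      ‖μ - (2 * n + 1) * π - (2 * β₂ / (β₁ + 1)) * (1 / ((2 * n + 1) * π))‖
        ≤ K / (n : ℝ) ^ 2 := by
  constructor
  · intro μ
    have h : exp (I*μ) * exp (-I*μ) = 1 := by
      rw [← Complex.exp_add]; norm_num
    linear_combination ((β₁-1)*(I*μ) - β₂) * h
  ·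
    have hβ : β₁ + 1 ≠ 0 := fun h => hβ₁ (by linear_combination h)
    intro C hC
    refine ⟨2*(‖β₂‖/‖β₁+1‖)*C + ((‖β₂‖/‖β₁+1‖)*(C+C^2)) + C^2, ⌈C⌉₊ + 1, ?_⟩
    intro n hn μ heq hnear hne
    obtain ⟨μ₀, hμ₀def⟩ : ∃ x : ℂ, (2 * (n:ℂ) + 1) * (π:ℂ) = x := ⟨_, rfl⟩
    rw [hμ₀def] at hnear hne ⊢
    obtain ⟨ε, hεdef⟩ : ∃ x : ℂ, μ - μ₀ = x := ⟨_, rfl⟩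
    rw [hεdef] at hnear ⊢
    -- numeric facts
    have hCle : C + 1 ≤ (n:ℝ) := by
      have h1 := Nat.le_ceil C
      have h2 : ((⌈C⌉₊ + 1 : ℕ) : ℝ) ≤ (n:ℝ) := by exact_mod_cast hn
      push_cast at h2; linarith
    have hN1 : (1:ℝ) ≤ (n:ℝ) := by linarith
    have hNpos : (0:ℝ) < (n:ℝ) := by linarith
    have hCn1 : C / n < 1 := by rw [div_lt_one hNpos]; linarith
    have hεlt1 : ‖ε‖ < 1 := lt_of_le_of_lt hnear hCn1
    have hεle1 : ‖ε‖ ≤ 1 := le_of_lt hεlt1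
    have hμ₀normEq : ‖μ₀‖ = (2*(n:ℝ)+1)*π := by
      rw [← hμ₀def, show (2*(n:ℂ)+1)*(π:ℂ) = (((2*(n:ℝ)+1)*π : ℝ) : ℂ) by push_cast; ring,
        Complex.norm_real, Real.norm_eq_abs]
      exact abs_of_nonneg (by positivity)
    have hμ₀norm : (n:ℝ) + 1 ≤ ‖μ₀‖ := by
      rw [hμ₀normEq]; nlinarith [Real.pi_gt_three]
    have hμnorm : (n:ℝ) ≤ ‖μ‖ := by
      have h := norm_sub_norm_le μ₀ μ
      have h2 : ‖μ₀ - μ‖ = ‖ε‖ := by rw [← hεdef, norm_sub_rev]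
      rw [h2] at h; linarith
    have hμ₀ne : μ₀ ≠ 0 := by
      intro h; rw [h, norm_zero] at hμ₀norm; linarith
    have hμne0 : μ ≠ 0 := by
      intro h; rw [h, norm_zero] at hμnorm; linarith
    have hexpμ₀ : exp (I * μ₀) = -1 := by
      have h : I * μ₀ = (n:ℂ) * (2*(π:ℂ)*I) + (π:ℂ)*I := by rw [← hμ₀def]; push_cast; ring
      rw [h, Complex.exp_add, Complex.exp_nat_mul_two_pi_mul_I, Complex.exp_pi_mul_I, one_mul]
    rcases mul_eq_zero.mp heq with h1 | h2
    · -- first factor zero: contradiction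
      exfalso
      have hexpμ : exp (-I * μ) = -1 := by linear_combination h1
      have hexpε : exp (-I * ε) = 1 := by
        have hstep : -I * ε = -I*μ + I*μ₀ := by rw [← hεdef]; ring
        rw [hstep, Complex.exp_add, hexpμ, hexpμ₀]; norm_num
      rcases Complex.exp_eq_one_iff.mp hexpε with ⟨k, hk⟩
      have hεk : ε = -(k:ℂ)*(2*π) := by
        apply mul_left_cancel₀ (a := -I) (by simpa using Complex.I_ne_zero)
        rw [hk]; ring
      rcases eq_or_ne k 0 with hk0 | hk0
      · rw [hk0] at hεk
        simp at hεk
        exact hne (sub_eq_zero.mp (hεdef.trans hεk))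
      · have h5 : ‖ε‖ = |(-(k:ℝ))*(2*π)| := by
          rw [hεk, show -(k:ℂ)*(2*(π:ℂ)) = (((-(k:ℝ))*(2*π) : ℝ) : ℂ) by push_cast; ring,
            Complex.norm_real, Real.norm_eq_abs]
        rw [abs_mul, abs_neg] at h5
        have h6 : |2*π| = 2*π := abs_of_nonneg (by positivity)
        rw [h6] at h5
        have hk1 : (1:ℝ) ≤ |(k:ℝ)| := by
          rw [← Int.cast_abs]
          exact_mod_cast Int.one_le_abs hk0
        have hπ := Real.pi_gt_three
        nlinarith [hεlt1]
    · -- second factor zero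
      have hexpμ : exp (I * μ) = -exp (I * ε) := by
        have h : I * μ = I*μ₀ + I*ε := by rw [← hεdef]; ring
        rw [h, Complex.exp_add, hexpμ₀]; ring
      have hrval : ‖exp (I*ε) - 1 - I*ε‖ ≤ ‖ε‖^2 := by
        have h := Complex.norm_exp_sub_one_sub_id_le (x := I*ε) (by
          simpa using hεle1)
        simpa using h
      obtain ⟨r, hrdef⟩ : ∃ x : ℂ, exp (I*ε) - 1 - I*ε = x := ⟨_, rfl⟩
      have hr : ‖r‖ ≤ ‖ε‖^2 := hrdef ▸ hrval
      have hexpε : exp (I*ε) = 1 + I*ε + r := by rw [← hrdef]; ring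
      rw [hexpμ, hexpε] at h2
      have hP : μ*(β₁+1)*ε = 2*β₂ + β₂*(I*ε+r) + I*μ*(β₁+1)*r := by
        linear_combination h2 + μ*(β₁+1)*ε*Complex.I_sq
      have hD : (β₁+1)*μ*μ₀ ≠ 0 := mul_ne_zero (mul_ne_zero hβ hμne0) hμ₀ne
      have hkey : ε - (2 * β₂ / (β₁ + 1)) * (1 / μ₀)
          = -2*β₂*ε/((β₁+1)*μ*μ₀) + β₂*(I*ε+r)/(μ*(β₁+1)) + I*r := by
        apply mul_right_cancel₀ hD
        have e1 : (ε - (2 * β₂ / (β₁ + 1)) * (1 / μ₀)) * ((β₁+1)*μ*μ₀)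
            = ε*((β₁+1)*μ*μ₀) - 2*β₂*μ := by
          field_simp
        have e2 : (-2*β₂*ε/((β₁+1)*μ*μ₀) + β₂*(I*ε+r)/(μ*(β₁+1)) + I*r) * ((β₁+1)*μ*μ₀)
            = -2*β₂*ε + β₂*(I*ε+r)*μ₀ + I*r*((β₁+1)*μ*μ₀) := by
          field_simp
        rw [e1, e2]
        linear_combination μ₀*hP - 2*β₂*hεdef
      rw [hkey]
      -- norm bounds
      have hB1 : (0:ℝ) < ‖β₁+1‖ := norm_pos_iff.mpr hβ
      have hεleC : ‖ε‖ ≤ C := hnear.trans (by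
        rw [div_le_iff₀ hNpos]; nlinarith)
      have ht1 : ‖-2*β₂*ε/((β₁+1)*μ*μ₀)‖ ≤ 2*‖β₂‖*C/(‖β₁+1‖*(n:ℝ)*(n:ℝ)) := by
        have e1 : ‖-2*β₂*ε/((β₁+1)*μ*μ₀)‖ = 2*‖β₂‖*‖ε‖/(‖β₁+1‖*‖μ‖*‖μ₀‖) := by
          simp [norm_div, norm_mul]
        rw [e1]
        gcongr
        linarith
      have hIr : ‖I*ε+r‖ ≤ (C+C^2)/(n:ℝ) := by
        have ha : ‖I*ε+r‖ ≤ ‖ε‖ + ‖r‖ := by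
          calc ‖I*ε+r‖ ≤ ‖I*ε‖ + ‖r‖ := norm_add_le _ _
          _ = ‖ε‖ + ‖r‖ := by simp
        have h2' : ‖ε‖^2 ≤ (C/n)^2 := by nlinarith [norm_nonneg ε]
        have h3 : (C/n)^2 ≤ C^2/n := by
          rw [div_pow]
          apply div_le_div_of_nonneg_left (by positivity) hNpos (by nlinarith)
        calc ‖I*ε+r‖ ≤ ‖ε‖ + ‖r‖ := ha
          _ ≤ C/n + C^2/n := by nlinarith
          _ = (C+C^2)/n := by ring
      have ht2 : ‖β₂*(I*ε+r)/(μ*(β₁+1))‖ ≤ ‖β₂‖*((C+C^2)/(n:ℝ))/((n:ℝ)*‖β₁+1‖) := by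
        have e2 : ‖β₂*(I*ε+r)/(μ*(β₁+1))‖ = ‖β₂‖*‖I*ε+r‖/(‖μ‖*‖β₁+1‖) := by
          simp [norm_div, norm_mul]
        rw [e2]
        gcongr
      have ht3 : ‖I*r‖ ≤ C^2/(n:ℝ)^2 := by
        have hIrr : ‖I*r‖ = ‖r‖ := by simp
        rw [hIrr]
        calc ‖r‖ ≤ ‖ε‖^2 := hr
          _ ≤ (C/n)^2 := by nlinarith [norm_nonneg ε]
          _ = C^2/(n:ℝ)^2 := by ring
      calc ‖-2*β₂*ε/((β₁+1)*μ*μ₀) + β₂*(I*ε+r)/(μ*(β₁+1)) + I*r‖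
          ≤ ‖-2*β₂*ε/((β₁+1)*μ*μ₀) + β₂*(I*ε+r)/(μ*(β₁+1))‖ + ‖I*r‖ := norm_add_le _ _
        _ ≤ (‖-2*β₂*ε/((β₁+1)*μ*μ₀)‖ + ‖β₂*(I*ε+r)/(μ*(β₁+1))‖) + ‖I*r‖ := by
            gcongr; exact norm_add_le _ _
        _ ≤ (2*‖β₂‖*C/(‖β₁+1‖*(n:ℝ)*(n:ℝ)) + ‖β₂‖*((C+C^2)/(n:ℝ))/((n:ℝ)*‖β₁+1‖)) + C^2/(n:ℝ)^2 := by
            gcongr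
        _ = (2*(‖β₂‖/‖β₁+1‖)*C + ((‖β₂‖/‖β₁+1‖)*(C+C^2)) + C^2) / (n:ℝ)^2 := by
            have arith : ∀ B2 B1 N : ℝ, B1 ≠ 0 → N ≠ 0 →
                (2*B2*C/(B1*N*N) + B2*((C+C^2)/N)/(N*B1)) + C^2/N^2
                  = (2*(B2/B1)*C + ((B2/B1)*(C+C^2)) + C^2) / N^2 := by
              intro B2 B1 N h1 h2
              field_simp
            exact arith ‖β₂‖ ‖β₁+1‖ n hB1.ne' hNpos.ne'
end

section
/- Let β₃ ≠ 1 and β₄ ∈ ℂ, β₄ ≠ 0. The function D₀¹(μ) = (1 − e^{−iμ})[iμ(1 − β₃)(e^{iμ} − 1) + β₄(e^{iμ} + 1)] vanishes exactly at the points μ = 2πn, n ∈ ℤ, and at points μ_n which for large n satisfy μ_n = 2πn + (β₄/(1 − β₃))·1/(πn) + O(1/n²). -/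
open Complex Real

set_option maxHeartbeats 1600000 in
lemma aux_root (b c : ℂ) (hb : b ≠ 0) (hc : c ≠ 0) :
    ∃ (N : ℕ), ∀ n : ℕ, N ≤ n → ∃ μn : ℂ,
      I * μn * c * (Complex.exp (I * μn) - 1) + b * (Complex.exp (I * μn) + 1) = 0 ∧
      ‖μn - 2 * π * n - (b / c) * (1 / (π * n))‖ ≤ ((4*‖b‖^2 + ‖b‖*(‖c‖+‖b‖))/(π^2*‖c‖^2)) / (n : ℝ) ^ 2 := by
  have hπ : (0:ℝ) < π := Real.pi_pos
  set B := ‖b‖ with hBdef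
  set Cr := ‖c‖ with hCdef
  have hB : 0 < B := norm_pos_iff.mpr hb
  have hCr : 0 < Cr := norm_pos_iff.mpr hc
  refine ⟨⌈(Cr+B)/(π*Cr) + 4*B/(π*Cr) + 8*B/(π^2*Cr) + 1⌉₊, ?_⟩
  intro n hn
  set nr : ℝ := (n : ℝ) with hnrdef
  have hceil : (Cr+B)/(π*Cr) + 4*B/(π*Cr) + 8*B/(π^2*Cr) + 1 ≤ nr := by
    refine le_trans (Nat.le_ceil _) ?_
    exact_mod_cast Nat.cast_le.mpr hn
  have h1 : (0:ℝ) ≤ (Cr+B)/(π*Cr) := by positivity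
  have h2 : (0:ℝ) ≤ 4*B/(π*Cr) := by positivity
  have h3 : (0:ℝ) ≤ 8*B/(π^2*Cr) := by positivity
  have hn1 : (1:ℝ) ≤ nr := by linarith
  have hnpos : (0:ℝ) < nr := by linarith
  have hnA : Cr + B ≤ π*Cr*nr := by
    have : (Cr+B)/(π*Cr) ≤ nr := by linarith
    calc Cr + B = ((Cr+B)/(π*Cr)) * (π*Cr) := by field_simp
    _ ≤ nr * (π*Cr) := by apply mul_le_mul_of_nonneg_right this; positivity
    _ = π*Cr*nr := by ring
  have hnB : 4*B ≤ π*Cr*nr := by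
    have : 4*B/(π*Cr) ≤ nr := by linarith
    calc 4*B = (4*B/(π*Cr)) * (π*Cr) := by field_simp
    _ ≤ nr * (π*Cr) := by apply mul_le_mul_of_nonneg_right this; positivity
    _ = π*Cr*nr := by ring
  have hnC : 8*B ≤ π^2*Cr*nr^2 := by
    have h : 8*B/(π^2*Cr) ≤ nr := by linarith
    have h2' : nr ≤ nr^2 := by nlinarith
    calc 8*B = (8*B/(π^2*Cr)) * (π^2*Cr) := by field_simp
    _ ≤ nr * (π^2*Cr) := by apply mul_le_mul_of_nonneg_right h; positivity
    _ ≤ nr^2 * (π^2*Cr) := by apply mul_le_mul_of_nonneg_right h2'; positivity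
    _ = π^2*Cr*nr^2 := by ring
  -- definitions
  set w : ℂ → ℂ := fun δ => I * (2*π*n + δ) * c with hwdef
  set u : ℂ → ℂ := fun δ => -2*b / (w δ + b) with hudef
  set g : ℂ → ℂ := fun δ => -I * Complex.log (1 + u δ) with hgdef
  have hπCn : (0:ℝ) < π*Cr*nr := by positivity
  -- basic norm bound on w δ + b
  have hwb : ∀ δ : ℂ, ‖δ‖ ≤ 1 → π*Cr*nr ≤ ‖w δ + b‖ := by
    intro δ hδ
    have hnn : ‖(2*(π:ℂ)*(n:ℂ))‖ = 2*π*nr := by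
      rw [show (2*(π:ℂ)*(n:ℂ)) = ((2*π*nr:ℝ):ℂ) from by rw [hnrdef]; push_cast; ring,
        Complex.norm_real, Real.norm_eq_abs]
      exact abs_of_nonneg (by positivity)
    have h2πn : 2*π*nr - 1 ≤ ‖(2*(π:ℂ)*(n:ℂ) + δ)‖ := by
      have h := norm_sub_norm_le (2*(π:ℂ)*(n:ℂ)) (-δ)
      rw [sub_neg_eq_add, hnn, norm_neg] at h
      linarith
    have hwnorm : ‖w δ‖ = ‖(2*(π:ℂ)*(n:ℂ) + δ)‖ * Cr := by
      simp only [hwdef, norm_mul, Complex.norm_I, one_mul, hCdef]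
    have hlow : ‖w δ‖ - B ≤ ‖w δ + b‖ := by
      have h := norm_sub_norm_le (w δ) (-b)
      rw [sub_neg_eq_add, norm_neg] at h
      linarith
    have hge : (2*π*nr - 1) * Cr ≤ ‖w δ‖ := by
      rw [hwnorm]; exact mul_le_mul_of_nonneg_right h2πn (le_of_lt hCr)
    nlinarith
  have hwb0 : ∀ δ : ℂ, ‖δ‖ ≤ 1 → w δ + b ≠ 0 := by
    intro δ hδ h
    have := hwb δ hδ
    rw [h, norm_zero] at this
    linarith
  have hu_le : ∀ δ : ℂ, ‖δ‖ ≤ 1 → ‖u δ‖ ≤ 2*B/(π*Cr*nr) := by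
    intro δ hδ
    have h2b : ‖(-2*b : ℂ)‖ = 2*B := by
      rw [norm_mul]; norm_num [hBdef]
    calc ‖u δ‖ = 2*B/‖w δ + b‖ := by simp only [hudef, norm_div, h2b]
    _ ≤ 2*B/(π*Cr*nr) := div_le_div_of_nonneg_left (by positivity) hπCn (hwb δ hδ)
  have hhalf : 2*B/(π*Cr*nr) ≤ 1/2 := by
    rw [div_le_iff₀ hπCn]; linarith
  have hu_half : ∀ δ : ℂ, ‖δ‖ ≤ 1 → ‖u δ‖ ≤ 1/2 := fun δ hδ => (hu_le δ hδ).trans hhalf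
  have hone_lb : ∀ δ : ℂ, ‖δ‖ ≤ 1 → 1/2 ≤ ‖1 + u δ‖ := by
    intro δ hδ
    have h := norm_sub_norm_le (1 : ℂ) (-(u δ))
    rw [sub_neg_eq_add, norm_neg, norm_one] at h
    linarith [hu_half δ hδ]
  have hone_ne : ∀ δ : ℂ, ‖δ‖ ≤ 1 → (1 + u δ) ≠ 0 := by
    intro δ hδ h
    have := hone_lb δ hδ
    rw [h, norm_zero] at this; linarith
  have hslit : ∀ δ : ℂ, ‖δ‖ ≤ 1 → (1 + u δ) ∈ Complex.slitPlane := by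
    intro δ hδ
    rw [Complex.mem_slitPlane_iff]
    left
    have h1 : |(u δ).re| ≤ ‖u δ‖ := Complex.abs_re_le_norm _
    have : (1 + u δ).re = 1 + (u δ).re := by simp
    rw [this]
    have := hu_half δ hδ
    cases abs_le.mp h1 with
    | intro hl hr => linarith
  -- the set
  set s : Set ℂ := Metric.closedBall (0:ℂ) 1 with hsdef
  have hmem : ∀ δ : ℂ, δ ∈ s ↔ ‖δ‖ ≤ 1 := by
    intro δ; rw [hsdef, Metric.mem_closedBall, dist_zero_right]
  have hsc : IsComplete s := Metric.isClosed_closedBall.isComplete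
  have hsf : Set.MapsTo g s s := by
    intro δ hδ
    rw [hmem] at hδ ⊢
    have : ‖g δ‖ = ‖Complex.log (1 + u δ)‖ := by
      simp only [hgdef, norm_mul, norm_neg, Complex.norm_I, one_mul]
    rw [this]
    calc ‖Complex.log (1 + u δ)‖ ≤ 3/2 * ‖u δ‖ :=
          Complex.norm_log_one_add_half_le_self (hu_half δ hδ)
    _ ≤ 3/2 * (1/2) := by linarith [hu_half δ hδ]
    _ ≤ 1 := by norm_num
  -- derivative
  set u' : ℂ → ℂ := fun δ => 2*b*(I*c)/(w δ + b)^2 with hu'def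
  have hw' : ∀ δ : ℂ, HasDerivAt w (I*c) δ := by
    intro δ
    have h := (((hasDerivAt_id δ).const_add (2*(π:ℂ)*(n:ℂ))).const_mul I).mul_const c
    simpa using h
  have hderivu : ∀ δ : ℂ, ‖δ‖ ≤ 1 → HasDerivAt u (u' δ) δ := by
    intro δ hδ
    have h := (hasDerivAt_const δ (-2*b : ℂ)).div ((hw' δ).add_const b) (hwb0 δ hδ)
    exact h.congr_deriv (by simp only [hu'def]; ring)
  have hderivg : ∀ δ : ℂ, ‖δ‖ ≤ 1 → HasDerivAt g (-I * (u' δ / (1 + u δ))) δ := by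
    intro δ hδ
    have h1 : HasDerivAt (fun δ => 1 + u δ) (u' δ) δ := (hderivu δ hδ).const_add 1
    have h2 := (h1.clog (hslit δ hδ)).const_mul (-I)
    exact h2
  have hu'bound : ∀ δ : ℂ, ‖δ‖ ≤ 1 → ‖u' δ‖ ≤ 2*B*Cr/(π*Cr*nr)^2 := by
    intro δ hδ
    have hnum : ‖(2*b*(I*c) : ℂ)‖ = 2*B*Cr := by
      simp only [norm_mul, Complex.norm_I, one_mul]
      norm_num [hBdef, hCdef]
    have hden : (π*Cr*nr)^2 ≤ ‖(w δ + b)^2‖ := by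
      rw [norm_pow]
      exact pow_le_pow_left₀ (le_of_lt hπCn) (hwb δ hδ) 2
    rw [hu'def]
    simp only [norm_div, hnum]
    exact div_le_div_of_nonneg_left (by positivity) (by positivity) hden
  have hgbound : ∀ δ : ℂ, ‖δ‖ ≤ 1 → ‖-I * (u' δ / (1 + u δ))‖ ≤ (1:ℝ)/2 := by
    intro δ hδ
    have : ‖-I * (u' δ / (1 + u δ))‖ = ‖u' δ‖ / ‖1 + u δ‖ := by
      simp [norm_mul, norm_div]
    rw [this]
    have h1 := hu'bound δ hδ
    have h2 := hone_lb δ hδ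
    have h3 : ‖u' δ‖ / ‖1 + u δ‖ ≤ ‖u' δ‖ / (1/2) :=
      div_le_div_of_nonneg_left (norm_nonneg _) (by norm_num) h2
    have h4 : 2*B*Cr/(π*Cr*nr)^2 ≤ 1/4 := by
      rw [div_le_iff₀ (by positivity)]
      nlinarith [mul_le_mul_of_nonneg_right hnC hCr.le]
    have h5 : ‖u' δ‖/(1/2 : ℝ) = 2*‖u' δ‖ := by ring
    rw [h5] at h3
    linarith
  -- contraction
  have hconv : Convex ℝ s := by rw [hsdef]; exact convex_closedBall 0 1
  have hlip : LipschitzOnWith (1/2 : NNReal) g s := by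
    apply Convex.lipschitzOnWith_of_nnnorm_hasDerivWithin_le
      (f' := fun δ => -I * (u' δ / (1 + u δ))) hconv
    · intro x hx
      exact (hderivg x ((hmem x).mp hx)).hasDerivWithinAt
    · intro x hx
      have hcoe : ((1/2 : NNReal) : ℝ) = 1/2 := by norm_num
      rw [← NNReal.coe_le_coe, coe_nnnorm, hcoe]
      exact hgbound x ((hmem x).mp hx)
  have hcontr : ContractingWith (1/2 : NNReal) (Set.MapsTo.restrict g s s hsf) := by
    constructor
    · rw [← NNReal.coe_lt_coe]; norm_num
    · exact hlip.mapsToRestrict hsf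
  have h0s : (0:ℂ) ∈ s := by rw [hmem]; norm_num
  obtain ⟨δn, hδns, hfix, -, -⟩ := hcontr.exists_fixedPoint' hsc hsf h0s (edist_ne_top _ _)
  have hδn1 : ‖δn‖ ≤ 1 := (hmem δn).mp hδns
  have hgfix : g δn = δn := hfix
  have hwne : w δn + b ≠ 0 := hwb0 δn hδn1
  have hδeq : δn = -I * Complex.log (1 + u δn) := by conv_lhs => rw [← hgfix]
  have hexp : Complex.exp (I*(2*(π:ℂ)*(n:ℂ) + δn)) = 1 + u δn := by
    have h1 : I*(2*(π:ℂ)*(n:ℂ) + δn) = ((n:ℤ):ℂ)*(2*(π:ℂ)*I) + I*δn := by push_cast; ring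
    rw [h1, Complex.exp_add, Complex.exp_int_mul_two_pi_mul_I, one_mul]
    have hIl : I * δn = Complex.log (1 + u δn) := by
      conv_lhs => rw [hδeq]
      rw [show I * (-I * Complex.log (1 + u δn)) = -(I*I) * Complex.log (1 + u δn) from by ring,
        Complex.I_mul_I]
      ring
    rw [hIl, Complex.exp_log (hone_ne δn hδn1)]
  have hπn0 : ((π:ℂ)*(n:ℂ)) ≠ 0 := by
    apply mul_ne_zero
    · exact Complex.ofReal_ne_zero.mpr (ne_of_gt hπ)
    · have hx := hnpos
      rw [hnrdef] at hx
      have hn0 : 0 < n := by exact_mod_cast hx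
      exact Nat.cast_ne_zero.mpr hn0.ne'
  refine ⟨2*(π:ℂ)*(n:ℂ) + δn, ?_, ?_⟩
  · have key : ∀ W E : ℂ, W + b ≠ 0 → E = 1 + (-2*b/(W+b)) → W * (E - 1) + b * (E + 1) = 0 := by
      intro W E hW hE
      subst hE
      field_simp
      ring
    have hexp' : Complex.exp (I*(2*(π:ℂ)*(n:ℂ) + δn)) = 1 + (-2*b/(w δn + b)) := by
      rw [hexp]
    rw [show I * (2*(π:ℂ)*(n:ℂ) + δn) * c = w δn from by rw [hwdef]]
    exact key (w δn) _ hwne hexp'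
  · have hπ0 : ((π:ℝ):ℂ) ≠ 0 := Complex.ofReal_ne_zero.mpr (ne_of_gt hπ)
    have hxx := hnpos
    rw [hnrdef] at hxx
    have hn0 : 0 < n := by exact_mod_cast hxx
    have hnc0 : ((n:ℕ):ℂ) ≠ 0 := Nat.cast_ne_zero.mpr hn0.ne'
    have hπnc : ‖((π:ℂ)*(n:ℂ)*c)‖ = π*nr*Cr := by
      rw [norm_mul]
      have hcast : ((π:ℂ)*(n:ℂ)) = ((π*nr : ℝ):ℂ) := by rw [hnrdef]; push_cast; ring
      rw [hcast, Complex.norm_real, Real.norm_eq_abs,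
        _root_.abs_of_nonneg (by positivity : (0:ℝ) ≤ π*nr)]
    have hwne' : I * (2*(π:ℂ)*(n:ℂ) + δn) * c + b ≠ 0 := by
      have := hwne; simp only [hwdef] at this; exact this
    have hid : -( (b/c) * (1/((π:ℂ)*(n:ℂ))) )
        = I * u δn + b*((-I*δn*c - b)/((w δn + b)*((π:ℂ)*(n:ℂ)*c))) := by
      simp only [hudef, hwdef]
      rw [show -I*δn*c - b = -(I * (2*(π:ℂ)*(n:ℂ) + δn) * c + b) + 2*I*π*n*c by ring]
      generalize I * (2*(π:ℂ)*(n:ℂ) + δn) * c + b = W at hwne' ⊢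
      field_simp
      ring
    have hsplit : (2*(π:ℂ)*(n:ℂ) + δn) - 2*(π:ℂ)*(n:ℂ) - (b/c)*(1/((π:ℂ)*(n:ℂ)))
        = -I*(Complex.log (1 + u δn) - u δn)
          + (b*((-I*δn*c - b)/((w δn + b)*((π:ℂ)*(n:ℂ)*c)))) := by
      linear_combination hδeq + hid
    rw [hsplit]
    have hu0 := hu_le δn hδn1
    have huh := hu_half δn hδn1
    have hlog : ‖Complex.log (1 + u δn) - u δn‖ ≤ ‖u δn‖^2 := by
      have h := Complex.norm_log_one_add_sub_self_le (lt_of_le_of_lt huh one_half_lt_one)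
      have h6 : (1:ℝ)/2 ≤ 1 - ‖u δn‖ := by linarith
      have hinv : (1 - ‖u δn‖)⁻¹ ≤ 2 := by
        have h7 : (0:ℝ) < 1 - ‖u δn‖ := by linarith
        calc (1 - ‖u δn‖)⁻¹ = 1 / (1 - ‖u δn‖) := (one_div _).symm
        _ ≤ 2 := by rw [div_le_iff₀ h7]; linarith
      nlinarith [sq_nonneg (‖u δn‖), norm_nonneg (u δn)]
    have hT1 : ‖-I*(Complex.log (1 + u δn) - u δn)‖ ≤ (2*B/(π*Cr*nr))^2 := by
      rw [norm_mul, norm_neg, Complex.norm_I, one_mul]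
      calc ‖Complex.log (1 + u δn) - u δn‖ ≤ ‖u δn‖^2 := hlog
      _ ≤ (2*B/(π*Cr*nr))^2 := pow_le_pow_left₀ (norm_nonneg _) hu0 2
    have hnum : ‖-I*δn*c - b‖ ≤ Cr + B := by
      calc ‖-I*δn*c - b‖ ≤ ‖-I*δn*c‖ + ‖b‖ := norm_sub_le _ _
      _ = ‖δn‖*Cr + B := by
          simp only [norm_mul, norm_neg, Complex.norm_I, one_mul, hCdef, hBdef]
      _ ≤ 1*Cr + B := add_le_add_left (mul_le_mul_of_nonneg_right hδn1 hCr.le) B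
      _ = Cr + B := by ring
    have hden : (π*Cr*nr)*(π*nr*Cr) ≤ ‖(w δn + b)*((π:ℂ)*(n:ℂ)*c)‖ := by
      rw [norm_mul, hπnc]
      exact mul_le_mul_of_nonneg_right (hwb δn hδn1) (by positivity)
    have hT2 : ‖b*((-I*δn*c - b)/((w δn + b)*((π:ℂ)*(n:ℂ)*c)))‖
        ≤ B*((Cr+B)/((π*Cr*nr)*(π*nr*Cr))) := by
      rw [norm_mul, norm_div]
      apply mul_le_mul_of_nonneg_left ?_ (norm_nonneg b)
      exact div_le_div₀ (by positivity) hnum (by positivity) hden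
    calc ‖-I*(Complex.log (1 + u δn) - u δn)
          + (b*((-I*δn*c - b)/((w δn + b)*((π:ℂ)*(n:ℂ)*c))))‖
        ≤ ‖-I*(Complex.log (1 + u δn) - u δn)‖
          + ‖b*((-I*δn*c - b)/((w δn + b)*((π:ℂ)*(n:ℂ)*c)))‖ := norm_add_le _ _
    _ ≤ (2*B/(π*Cr*nr))^2 + B*((Cr+B)/((π*Cr*nr)*(π*nr*Cr))) := add_le_add hT1 hT2
    _ = ((4*B^2 + B*(Cr+B))/(π^2*Cr^2))/nr^2 := by field_simp; ring


theorem stmt_18 (β₃ β₄ : ℂ) (hβ₃ : β₃ ≠ 1) (hβ₄ : β₄ ≠ 0)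
    (D : ℂ → ℂ)
    (hD : ∀ μ : ℂ, D μ = (1 - exp (-I * μ)) *
      (I * μ * (1 - β₃) * (exp (I * μ) - 1) + β₄ * (exp (I * μ) + 1))) :
    (∀ μ : ℂ, D μ = 0 ↔
      ((∃ n : ℤ, μ = 2 * π * n) ∨
        I * μ * (1 - β₃) * (exp (I * μ) - 1) + β₄ * (exp (I * μ) + 1) = 0)) ∧
    ∃ (K : ℝ) (N : ℕ) (μ : ℕ → ℂ), ∀ n : ℕ, N ≤ n →
      I * μ n * (1 - β₃) * (exp (I * μ n) - 1) + β₄ * (exp (I * μ n) + 1) = 0 ∧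
      ‖μ n - 2 * π * n - (β₄ / (1 - β₃)) * (1 / (π * n))‖ ≤ K / (n : ℝ) ^ 2 := by
  constructor
  · intro μ
    rw [hD μ, mul_eq_zero]
    constructor
    · rintro (h | h)
      · left
        rw [sub_eq_zero] at h
        obtain ⟨k, hk⟩ := Complex.exp_eq_one_iff.mp h.symm
        exact ⟨-k, by push_cast; linear_combination I*hk + (μ + 2*(π:ℂ)*k)*Complex.I_sq⟩
      · right; exact h
    · rintro (⟨k, hk⟩ | h)
      · left
        rw [sub_eq_zero]
        exact (Complex.exp_eq_one_iff.mpr ⟨-k, by push_cast; linear_combination (-I)*hk⟩).symm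
      · right; exact h
  · obtain ⟨N, h⟩ := aux_root β₄ (1 - β₃) hβ₄ (sub_ne_zero.mpr (Ne.symm hβ₃))
    have h' : ∀ n : ℕ, ∃ μn : ℂ, N ≤ n →
        (I * μn * (1-β₃) * (Complex.exp (I*μn) - 1) + β₄ * (Complex.exp (I*μn) + 1) = 0 ∧
        ‖μn - 2*π*n - (β₄/(1-β₃)) * (1/(π*n))‖ ≤
          ((4*‖β₄‖^2 + ‖β₄‖*(‖1-β₃‖+‖β₄‖))/(π^2*‖1-β₃‖^2)) / (n:ℝ)^2) := by
      intro n
      by_cases hN : N ≤ n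
      · obtain ⟨μn, h1, h2⟩ := h n hN
        exact ⟨μn, fun _ => ⟨h1, h2⟩⟩
      · exact ⟨0, fun hc => absurd hc hN⟩
    choose μf hμf using h'
    exact ⟨_, N, μf, fun n hn => hμf n hn⟩
end

section
/- Let f(μ) = e^{iμ} − 1 − (iβ₂/(β₁−1))(e^{iμ}+1)/μ with β₁ ≠ 1, and let μ₀ = 2πn + (β₂/(β₁−1))/(πn) + O(1/n²) be its zero near 2πn. Then there exist constants c > 0 and N such that for all n ≥ N and all μ on the circle |μ − μ₀| = ε_n/n with 0 < ε_n ≤ 1, one has |f(μ)| > c·ε_n/(2n). -/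
open Complex Real

set_option maxHeartbeats 4000000 in
theorem stmt_19 (β₁ β₂ : ℂ) (hβ₁ : β₁ ≠ 1)
    (f : ℂ → ℂ)
    (hf : ∀ μ : ℂ, f μ = exp (I * μ) - 1 - (I * β₂ / (β₁ - 1)) * (exp (I * μ) + 1) / μ)
    (μ₀ : ℕ → ℂ) (K : ℝ)
    (hroot : ∀ n : ℕ, 1 ≤ n → f (μ₀ n) = 0)
    (hasym : ∀ n : ℕ, 1 ≤ n →
      ‖μ₀ n - 2 * π * n - (β₂ / (β₁ - 1)) * (1 / (π * n))‖ ≤ K / (n : ℝ) ^ 2) :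
    ∃ (c : ℝ) (N : ℕ), 0 < c ∧ ∀ n : ℕ, N ≤ n →
      ∀ ε : ℝ, 0 < ε → ε ≤ 1 → ∀ μ : ℂ, ‖μ - μ₀ n‖ = ε / n →
        c * ε / (2 * n) < ‖f μ‖ := by
  have hβ : β₁ - 1 ≠ 0 := sub_ne_zero.mpr hβ₁
  set B : ℂ := β₂ / (β₁ - 1) with hBdef
  set CB : ℝ := ‖B‖ with hCBdef
  have hCB0 : 0 ≤ CB := norm_nonneg _
  have hK0 : 0 ≤ |K| := abs_nonneg K
  refine ⟨1/2, ⌈20*(CB + |K| + 1)⌉₊, by norm_num, ?_⟩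
  intro n hn ε hε hε1 μ hμ
  have hpi : (3:ℝ) < π := Real.pi_gt_three
  have hNge : (20:ℝ)*(CB + |K| + 1) ≤ (n:ℝ) := by
    calc (20:ℝ)*(CB + |K| + 1) ≤ (⌈20*(CB + |K| + 1)⌉₊ : ℝ) := Nat.le_ceil _
    _ ≤ (n:ℝ) := by exact_mod_cast hn
  have hn20 : (20:ℝ) ≤ (n:ℝ) := by linarith
  have hnpos : (0:ℝ) < (n:ℝ) := by linarith
  have hn1 : 1 ≤ n := by exact_mod_cast (by linarith : (1:ℝ) ≤ (n:ℝ))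
  set z : ℂ := μ₀ n with hzdef
  set h : ℂ := μ - z with hhdef
  set t : ℝ := ‖h‖ with htdef
  have ht : t = ε / n := hμ
  have ht0 : 0 < t := by rw [ht]; positivity
  set u : ℝ := (n:ℝ)⁻¹ with hudef
  have hu0 : 0 < u := by positivity
  have hu20 : u ≤ 1/20 := by
    rw [hudef, inv_le_comm₀ (by linarith) (by norm_num)]; linarith
  have htu : t ≤ u := by
    rw [ht, hudef, div_le_iff₀ hnpos, inv_mul_cancel₀ (ne_of_gt hnpos)]; exact hε1
  have hCBu : CB * u ≤ 1/20 := by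
    rw [hudef, mul_inv_le_iff₀ hnpos]; linarith
  have hKu : |K| * u ≤ 1/20 := by
    rw [hudef, mul_inv_le_iff₀ hnpos]; linarith
  -- bound on ‖z - 2πn‖
  have hasy := hasym n hn1
  have hBn : ‖B * (1 / ((π:ℂ) * (n:ℂ)))‖ ≤ CB * u := by
    rw [norm_mul]
    have h1 : (1 / ((π:ℂ) * (n:ℂ))) = (((1 / (π * n) : ℝ)) : ℂ) := by push_cast; ring
    rw [h1, Complex.norm_real, Real.norm_eq_abs, abs_of_pos (by positivity)]
    have h2 : (1:ℝ) / (π * n) ≤ u := by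
      rw [hudef, div_le_iff₀ (by positivity)]
      have e : (n:ℝ)⁻¹ * (π*(n:ℝ)) = π * ((n:ℝ)⁻¹*(n:ℝ)) := by ring
      rw [e, inv_mul_cancel₀ (ne_of_gt hnpos), mul_one]; linarith
    exact mul_le_mul_of_nonneg_left h2 hCB0
  have hKn : K / (n:ℝ)^2 ≤ |K| * u := by
    rw [div_le_iff₀ (by positivity : (0:ℝ) < (n:ℝ)^2)]
    have h1 : |K| * u * (n:ℝ)^2 = |K| * n := by
      rw [hudef]
      have e : |K| * (n:ℝ)⁻¹ * (n:ℝ)^2 = |K| * ((n:ℝ)⁻¹*(n:ℝ)) * (n:ℝ) := by ring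
      rw [e, inv_mul_cancel₀ (ne_of_gt hnpos)]; ring
    rw [h1]
    have h2 : |K| * 1 ≤ |K| * (n:ℝ) :=
      mul_le_mul_of_nonneg_left (by linarith : (1:ℝ) ≤ (n:ℝ)) hK0
    linarith [le_abs_self K]
  have hz2 : ‖z - 2*(π:ℂ)*(n:ℂ)‖ ≤ 1/10 := by
    have htri := norm_add_le (z - 2*(π:ℂ)*(n:ℂ) - B*(1/((π:ℂ)*(n:ℂ)))) (B*(1/((π:ℂ)*(n:ℂ))))
    rw [sub_add_cancel] at htri
    have : ‖z - 2*(π:ℂ)*(n:ℂ)‖ ≤ K/(n:ℝ)^2 + CB*u := by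
      refine le_trans htri (add_le_add ?_ hBn)
      exact hasy
    linarith
  have hn2πn : ‖(2*(π:ℂ)*(n:ℂ))‖ = 2*π*n := by
    have h1 : (2*(π:ℂ)*(n:ℂ)) = ((2*π*n : ℝ) : ℂ) := by push_cast; ring
    rw [h1, Complex.norm_real, Real.norm_eq_abs, abs_of_pos (by positivity)]
  have hzlb : 2*π*(n:ℝ) - 1/10 ≤ ‖z‖ := by
    have h1 := norm_sub_norm_le (2*(π:ℂ)*(n:ℂ)) z
    rw [norm_sub_rev, hn2πn] at h1
    linarith
  have hpin : (n:ℝ)*3 < (n:ℝ)*π := (mul_lt_mul_iff_right₀ hnpos).mpr hpi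
  have hnz : (n:ℝ) ≤ ‖z‖ := by linarith
  have hnμ : (n:ℝ) ≤ ‖μ‖ := by
    have h1 := norm_sub_norm_le z μ
    rw [norm_sub_rev] at h1
    have h2 : ‖μ - z‖ = t := rfl
    rw [h2] at h1
    linarith
  have hz0 : z ≠ 0 := norm_pos_iff.mp (by linarith)
  have hμ0' : μ ≠ 0 := norm_pos_iff.mp (by linarith)
  -- imaginary parts
  have hImz : |z.im| ≤ 1/10 := by
    have h1 : z.im = (z - 2*(π:ℂ)*(n:ℂ)).im := by simp
    rw [h1]
    calc |(z - 2*(π:ℂ)*(n:ℂ)).im| ≤ ‖z - 2*(π:ℂ)*(n:ℂ)‖ := by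
          exact Complex.abs_im_le_norm _
    _ ≤ 1/10 := hz2
  have hImh : |h.im| ≤ t := by
    rw [htdef]; exact Complex.abs_im_le_norm _
  -- bounds on ‖exp(I z)‖
  have hEznorm : ‖exp (I*z)‖ = Real.exp (-(z.im)) := by
    rw [Complex.norm_exp]
    congr 1
    simp [Complex.mul_re]
  have habsz := abs_le.mp hImz
  have hEzlb : 4/5 ≤ ‖exp (I*z)‖ := by
    rw [hEznorm]
    have := Real.add_one_le_exp (-(z.im))
    linarith
  have hEzub : ‖exp (I*z)‖ ≤ 5/4 := by
    rw [hEznorm, Real.exp_neg, inv_le_comm₀ (Real.exp_pos _) (by norm_num)]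
    have := Real.add_one_le_exp (z.im)
    linarith
  -- bounds on ‖exp(I h) - 1‖
  have hIht : ‖I*h‖ = t := by rw [norm_mul, Complex.norm_I, one_mul]
  have hIh1 : ‖I*h‖ ≤ 1 := by
    rw [hIht]; linarith
  have hkey := Complex.norm_exp_sub_one_sub_id_le hIh1
  rw [hIht] at hkey
  have hehlb : t - t^2 ≤ ‖exp (I*h) - 1‖ := by
    have h1 := norm_sub_norm_le (I*h) (exp (I*h) - 1)
    have h3 : ‖I*h - (exp (I*h) - 1)‖ = ‖exp (I*h) - 1 - I*h‖ := by
      rw [← norm_neg]; congr 1; ring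
    rw [h3, hIht] at h1
    linarith
  have hehub : ‖exp (I*h) - 1‖ ≤ 2*t := by
    have h1 := norm_add_le (exp (I*h) - 1 - I*h) (I*h)
    rw [sub_add_cancel, hIht] at h1
    have htle1 : t ≤ 1 := le_trans htu (by linarith)
    have h2 : t^2 ≤ t*1 := by rw [sq]; exact mul_le_mul_of_nonneg_left htle1 ht0.le
    linarith
  -- the identity
  have hfz : f z = 0 := hroot n hn1
  have hEμ : exp (I*μ) = exp (I*z) * exp (I*h) := by
    rw [← Complex.exp_add]; congr 1; rw [hhdef]; ring
  have hid : f μ = exp (I*z)*(exp (I*h) - 1)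
      - (I*B) * ((exp (I*z)*(exp (I*h) - 1))/μ + (exp (I*z)+1)*(1/μ - 1/z)) := by
    have h0 : f μ = f μ - f z := by rw [hfz, sub_zero]
    rw [h0, hf μ, hf z, hEμ, hBdef]
    field_simp
    ring
  -- norms
  set T1 : ℝ := ‖exp (I*z)‖ * ‖exp (I*h) - 1‖ with hT1def
  have hT1pos : 0 ≤ T1 := by positivity
  have htle1 : t ≤ 1 := le_trans htu (by linarith)
  have htsq : t^2 ≤ t*1 := by rw [sq]; exact mul_le_mul_of_nonneg_left htle1 ht0.le
  have hT1lb : (4/5)*(t - t^2) ≤ T1 := by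
    rw [hT1def]
    have b1 : (4/5)*‖exp (I*h) - 1‖ ≤ ‖exp (I*z)‖*‖exp (I*h) - 1‖ :=
      mul_le_mul_of_nonneg_right hEzlb (norm_nonneg _)
    have b2 : (4/5)*(t - t^2) ≤ (4/5)*‖exp (I*h) - 1‖ := by linarith
    linarith
  have hT1ub : T1 ≤ (5/2)*t := by
    rw [hT1def]
    have b1 : ‖exp (I*z)‖*‖exp (I*h) - 1‖ ≤ (5/4)*‖exp (I*h) - 1‖ :=
      mul_le_mul_of_nonneg_right hEzub (norm_nonneg _)
    have b2 : (5/4)*‖exp (I*h) - 1‖ ≤ (5/4)*(2*t) := by linarith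
    linarith
  have hinvμ : ‖μ‖⁻¹ ≤ u := by
    rw [hudef]; exact inv_anti₀ hnpos hnμ
  have hX1 : ‖(exp (I*z)*(exp (I*h) - 1))/μ‖ ≤ T1 * u := by
    rw [norm_div, norm_mul, div_eq_mul_inv]
    exact mul_le_mul_of_nonneg_left hinvμ hT1pos
  have hEz1 : ‖exp (I*z) + 1‖ ≤ 9/4 := by
    have := norm_add_le (exp (I*z)) (1:ℂ)
    simp only [norm_one] at this
    linarith
  have hinvdiff : ‖1/μ - 1/z‖ = t / (‖μ‖ * ‖z‖) := by
    have h1 : 1/μ - 1/z = (z - μ)/(μ*z) := by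
      rw [div_sub_div _ _ hμ0' hz0, one_mul, mul_one]
    rw [h1, norm_div, norm_mul, norm_sub_rev]
  have hX2 : ‖(exp (I*z)+1)*(1/μ - 1/z)‖ ≤ (9/4)*(t*(u*u)) := by
    rw [norm_mul, hinvdiff]
    have h1 : t / (‖μ‖ * ‖z‖) ≤ t * (u * u) := by
      have hmz : (0:ℝ) < ‖μ‖ * ‖z‖ :=
        mul_pos (by linarith : (0:ℝ) < ‖μ‖) (by linarith : (0:ℝ) < ‖z‖)
      rw [div_le_iff₀ hmz]
      have h2 : t * (u*u) * ((n:ℝ)*(n:ℝ)) ≤ t * (u*u) * (‖μ‖*‖z‖) := by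
        apply mul_le_mul_of_nonneg_left _
          (mul_nonneg ht0.le (mul_nonneg hu0.le hu0.le))
        exact mul_le_mul hnμ hnz (le_of_lt hnpos) (norm_nonneg _)
      have hun : u * (n:ℝ) = 1 := inv_mul_cancel₀ (ne_of_gt hnpos)
      have h3 : t * (u*u) * ((n:ℝ)*(n:ℝ)) = t := by
        have e : t * (u*u) * ((n:ℝ)*(n:ℝ)) = t * ((u*(n:ℝ))*(u*(n:ℝ))) := by ring
        rw [e, hun]; ring
      linarith
    calc ‖exp (I*z)+1‖ * (t / (‖μ‖ * ‖z‖)) ≤ (9/4) * (t / (‖μ‖*‖z‖)) := by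
          apply mul_le_mul_of_nonneg_right hEz1
          have hmz : (0:ℝ) < ‖μ‖ * ‖z‖ :=
            mul_pos (by linarith : (0:ℝ) < ‖μ‖) (by linarith : (0:ℝ) < ‖z‖)
          positivity
    _ ≤ (9/4)*(t*(u*u)) := by linarith
  have hIB : ‖(I*B : ℂ)‖ = CB := by rw [norm_mul, Complex.norm_I, one_mul]
  have hmain : T1 - CB*(T1*u + (9/4)*(t*(u*u))) ≤ ‖f μ‖ := by
    rw [hid]
    have h1 := norm_sub_norm_le (exp (I*z)*(exp (I*h) - 1))
      ((I*B) * ((exp (I*z)*(exp (I*h) - 1))/μ + (exp (I*z)+1)*(1/μ - 1/z)))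
    have h2 : ‖(I*B) * ((exp (I*z)*(exp (I*h) - 1))/μ + (exp (I*z)+1)*(1/μ - 1/z))‖
        ≤ CB*(T1*u + (9/4)*(t*(u*u))) := by
      rw [norm_mul, hIB]
      apply mul_le_mul_of_nonneg_left _ hCB0
      exact le_trans (norm_add_le _ _) (add_le_add hX1 hX2)
    have h3 : ‖exp (I*z)*(exp (I*h) - 1)‖ = T1 := norm_mul _ _
    linarith
  -- final arithmetic
  have hgoal : 1/2 * ε / (2*(n:ℝ)) = t/4 := by
    rw [ht]; ring
  rw [hgoal]
  have p1 : CB*u*t ≤ (1/20)*t := mul_le_mul_of_nonneg_right hCBu ht0.le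
  have p2 : t*u ≤ t*(1/20) := mul_le_mul_of_nonneg_left hu20 ht0.le
  have p3 : t*t ≤ t*u := mul_le_mul_of_nonneg_left htu ht0.le
  have s1 : CB*(T1*u) ≤ (1/8)*t := by
    have a1 : T1*u ≤ ((5/2)*t)*u := mul_le_mul_of_nonneg_right hT1ub hu0.le
    have a2 : CB*(T1*u) ≤ CB*(((5/2)*t)*u) := mul_le_mul_of_nonneg_left a1 hCB0
    have a3 : CB*(((5/2)*t)*u) = (5/2)*(CB*u*t) := by ring
    rw [a3] at a2
    linarith
  have s2 : CB*((9/4)*(t*(u*u))) ≤ (9/4)*((1/20)*(t*u)) := by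
    have a1 : CB*((9/4)*(t*(u*u))) = (9/4)*((CB*u)*(t*u)) := by ring
    have a4 : (CB*u)*(t*u) ≤ (1/20)*(t*u) :=
      mul_le_mul_of_nonneg_right hCBu (mul_nonneg ht0.le hu0.le)
    rw [a1]
    linarith
  have s3 : CB*(T1*u + (9/4)*(t*(u*u))) = CB*(T1*u) + CB*((9/4)*(t*(u*u))) := by ring
  have ht2 : t^2 = t*t := sq t
  rw [s3] at hmain
  linarith
end
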